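/- arXiv:2512.14886 — 2 statements merged into one kernel-verified Lean document; each statement's English description precedes it below -/
import Mathlib

section
/- Let Ĝ be a signed complete bigraph, i.e. a signed bigraph whose underlying graph is a complete bipartite graph. If Ĝ has a signed simplicial edge, then Ĝ is a chordal signed bigraph. -/
universe u

/-! ## Basic unsigned notions for bipartite graphs -/

/-- `G` has an induced cycle of length at least 6 (signs, if any, are arbitrary). -/
def HasLongInducedCycle {V : Type u} (G : SimpleGraph V) : Prop :=
  ∃ n : ℕ, 6 ≤ n ∧ ∃ f : ZMod n → V, Function.Injective f ∧
    ∀ i j : ZMod n, G.Adj (f i) (f j) ↔ (j = i + 1 ∨ i = j + 1)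

/-- A graph is separable if it contains an induced `2K₂`. -/
def IsSeparableGraph {V : Type u} (G : SimpleGraph V) : Prop :=
  ∃ a b c d : V, [a, b, c, d].Pairwise (· ≠ ·) ∧
    G.Adj a b ∧ G.Adj c d ∧ ¬ G.Adj a c ∧ ¬ G.Adj a d ∧ ¬ G.Adj b c ∧ ¬ G.Adj b d

/-- An edge `ab` of a bipartite graph is simplicial if every vertex of `N(a) - {b}`
is adjacent to every vertex of `N(b) - {a}`. -/
def SimplicialEdge {V : Type u} (G : SimpleGraph V) (a b : V) : Prop :=
  G.Adj a b ∧ ∀ c ∈ G.neighborSet a \ {b}, ∀ d ∈ G.neighborSet b \ {a}, G.Adj c d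

/-- A canonical ordering of a bigraph with bipartition given by `side`
(`X` is the `side = true` part, `Y` the `side = false` part): the neighbourhoods of
the `x`'s are decreasing and those of the `y`'s are increasing. -/
def IsCanonicalOrdering {V : Type u} (G : SimpleGraph V) (side : V → Bool)
    {α β : ℕ} (x : Fin α → V) (y : Fin β → V) : Prop :=
  Function.Injective x ∧ Function.Injective y ∧
  (∀ w : V, side w = true ↔ w ∈ Set.range x) ∧
  (∀ w : V, side w = false ↔ w ∈ Set.range y) ∧
  (∀ i j : Fin α, i ≤ j → G.neighborSet (x j) ⊆ G.neighborSet (x i)) ∧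
  (∀ i j : Fin β, i ≤ j → G.neighborSet (y i) ⊆ G.neighborSet (y j))

/-- `H` is a non-trivial (i.e. containing at least one edge) connected component
of `G - S`. -/
def IsNontrivialComponentOf {V : Type u} (G : SimpleGraph V) (S H : Set V) : Prop :=
  H ⊆ Sᶜ ∧ (G.induce H).Connected ∧
  (∀ a ∈ H, ∀ b ∈ Sᶜ, G.Adj a b → b ∈ H) ∧
  (∃ a ∈ H, ∃ b ∈ H, G.Adj a b)

/-- `S` minimally separates the non-trivial components `H` and `H'` of `G - S`:
every vertex of `S` has a neighbour in `H` and a neighbour in `H'`. -/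
def MinimallySeparates {V : Type u} (G : SimpleGraph V) (S H H' : Set V) : Prop :=
  IsNontrivialComponentOf G S H ∧ IsNontrivialComponentOf G S H' ∧ H ≠ H' ∧
  ∀ s ∈ S, (∃ a ∈ H, G.Adj s a) ∧ (∃ a ∈ H', G.Adj s a)

/-! ## Signed bigraphs -/

/-- A signed bigraph: a bipartite graph (with bipartition recorded by `side`)
whose edges carry a sign (`true` = positive, `false` = negative). -/
structure SignedBigraph (V : Type u) where
  graph : SimpleGraph V
  sign : V → V → Bool
  sign_symm : ∀ a b : V, sign a b = sign b a
  side : V → Bool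
  bipartite : ∀ ⦃a b : V⦄, graph.Adj a b → side a ≠ side b

namespace SignedBigraph

variable {V : Type u}

def Adj (G : SignedBigraph V) (a b : V) : Prop := G.graph.Adj a b

/-- `N(ab) = (N(a) ∪ N(b)) - {a, b}`. -/
def edgeNbhd (G : SignedBigraph V) (a b : V) : Set V :=
  (G.graph.neighborSet a ∪ G.graph.neighborSet b) \ {a, b}

/-- The edge `ab` is signed simplicial: `N(ab)` induces a positive biclique. -/
def SignedSimplicial (G : SignedBigraph V) (a b : V) : Prop :=
  G.Adj a b ∧
    ∀ c ∈ G.edgeNbhd a b, ∀ d ∈ G.edgeNbhd a b,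
      G.side c ≠ G.side d → (G.Adj c d ∧ G.sign c d = true)

/-- Delete a set of edges from a signed bigraph (keeping all vertices). -/
def deleteEdges (G : SignedBigraph V) (s : Set (Sym2 V)) : SignedBigraph V where
  graph := G.graph.deleteEdges s
  sign := G.sign
  sign_symm := G.sign_symm
  side := G.side
  bipartite := by
    intro a b h
    exact G.bipartite (SimpleGraph.deleteEdges_adj.mp h).1

/-- The induced signed subgraph on a set of vertices. -/
def induce (G : SignedBigraph V) (A : Set V) : SignedBigraph A where
  graph := G.graph.induce A
  sign a b := G.sign a b
  sign_symm a b := G.sign_symm a b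
  side a := G.side a
  bipartite := by
    intro a b h
    exact G.bipartite h

/-- A chordal signed bigraph: the edges can be ordered `e₁, …, e_m` so that each `eᵢ`
is a signed simplicial edge of the signed bigraph obtained by deleting `e₁, …, e_{i-1}`. -/
def IsChordal (G : SignedBigraph V) : Prop :=
  ∃ l : List (Sym2 V), l.Nodup ∧ (∀ e, e ∈ G.graph.edgeSet ↔ e ∈ l) ∧
    ∀ (i : ℕ) (h : i < l.length), ∃ a b : V,
      l.get ⟨i, h⟩ = s(a, b) ∧
      (G.deleteEdges {e | e ∈ l.take i}).SignedSimplicial a b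

/-! ## Forbidden patterns F₁ – F₆, D, long cycles -/

/-- `G` contains the all-negative 4-cycle `F₁` as an induced subgraph. -/
def HasF1 (G : SignedBigraph V) : Prop :=
  ∃ u1 u2 v1 v2 : V,
    [u1, u2, v1, v2].Pairwise (· ≠ ·) ∧
    G.Adj u1 v1 ∧ G.Adj u1 v2 ∧ G.Adj u2 v1 ∧ G.Adj u2 v2 ∧
    ¬ G.Adj u1 u2 ∧ ¬ G.Adj v1 v2 ∧
    G.sign u1 v1 = false ∧ G.sign u1 v2 = false ∧
    G.sign u2 v1 = false ∧ G.sign u2 v2 = false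

/-- `G` contains a member of `F₂` (a signed `K_{2,3}`) as an induced subgraph. -/
def HasF2 (G : SignedBigraph V) : Prop :=
  ∃ u1 u2 v1 v2 v3 : V,
    [u1, u2, v1, v2, v3].Pairwise (· ≠ ·) ∧
    G.Adj u1 v1 ∧ G.Adj u1 v2 ∧ G.Adj u1 v3 ∧
    G.Adj u2 v1 ∧ G.Adj u2 v2 ∧ G.Adj u2 v3 ∧
    ¬ G.Adj u1 u2 ∧ ¬ G.Adj v1 v2 ∧ ¬ G.Adj v1 v3 ∧ ¬ G.Adj v2 v3 ∧
    G.sign u1 v1 = false ∧ G.sign u1 v2 = false ∧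
    G.sign u2 v2 = false ∧ G.sign u2 v3 = false

/-- `G` contains a member of `F₃` (a signed `K_{2,4}`) as an induced subgraph. -/
def HasF3 (G : SignedBigraph V) : Prop :=
  ∃ u1 u2 v1 v2 v3 v4 : V,
    [u1, u2, v1, v2, v3, v4].Pairwise (· ≠ ·) ∧
    G.Adj u1 v1 ∧ G.Adj u1 v2 ∧ G.Adj u1 v3 ∧ G.Adj u1 v4 ∧
    G.Adj u2 v1 ∧ G.Adj u2 v2 ∧ G.Adj u2 v3 ∧ G.Adj u2 v4 ∧
    ¬ G.Adj u1 u2 ∧ ¬ G.Adj v1 v2 ∧ ¬ G.Adj v1 v3 ∧ ¬ G.Adj v1 v4 ∧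
    ¬ G.Adj v2 v3 ∧ ¬ G.Adj v2 v4 ∧ ¬ G.Adj v3 v4 ∧
    G.sign u1 v1 = false ∧ G.sign u1 v2 = false ∧
    G.sign u2 v3 = false ∧ G.sign u2 v4 = false

/-- `G` contains a member of `F₄` (a signed `K_{3,3}` with negative perfect matching)
as an induced subgraph. -/
def HasF4 (G : SignedBigraph V) : Prop :=
  ∃ u1 u2 u3 v1 v2 v3 : V,
    [u1, u2, u3, v1, v2, v3].Pairwise (· ≠ ·) ∧
    G.Adj u1 v1 ∧ G.Adj u1 v2 ∧ G.Adj u1 v3 ∧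
    G.Adj u2 v1 ∧ G.Adj u2 v2 ∧ G.Adj u2 v3 ∧
    G.Adj u3 v1 ∧ G.Adj u3 v2 ∧ G.Adj u3 v3 ∧
    ¬ G.Adj u1 u2 ∧ ¬ G.Adj u1 u3 ∧ ¬ G.Adj u2 u3 ∧
    ¬ G.Adj v1 v2 ∧ ¬ G.Adj v1 v3 ∧ ¬ G.Adj v2 v3 ∧
    G.sign u1 v1 = false ∧ G.sign u2 v2 = false ∧ G.sign u3 v3 = false

/-- `G` contains a member of `F₅` as an induced subgraph. -/
def HasF5 (G : SignedBigraph V) : Prop :=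
  ∃ x1 x2 x3 y1 y2 y3 : V,
    [x1, x2, x3, y1, y2, y3].Pairwise (· ≠ ·) ∧
    G.Adj x1 y1 ∧ G.Adj x1 y2 ∧ ¬ G.Adj x1 y3 ∧
    G.Adj x2 y1 ∧ G.Adj x2 y2 ∧ G.Adj x2 y3 ∧
    G.Adj x3 y1 ∧ G.Adj x3 y2 ∧ G.Adj x3 y3 ∧
    ¬ G.Adj x1 x2 ∧ ¬ G.Adj x1 x3 ∧ ¬ G.Adj x2 x3 ∧
    ¬ G.Adj y1 y2 ∧ ¬ G.Adj y1 y3 ∧ ¬ G.Adj y2 y3 ∧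
    G.sign x2 y1 = false ∧ G.sign x3 y2 = false

/-- `G` contains a member of `F₆` as an induced subgraph. -/
def HasF6 (G : SignedBigraph V) : Prop :=
  ∃ x1 x2 x3 x4 y1 y2 y3 y4 : V,
    [x1, x2, x3, x4, y1, y2, y3, y4].Pairwise (· ≠ ·) ∧
    G.Adj x1 y1 ∧ G.Adj x1 y2 ∧ ¬ G.Adj x1 y3 ∧ ¬ G.Adj x1 y4 ∧
    G.Adj x2 y1 ∧ G.Adj x2 y2 ∧ ¬ G.Adj x2 y3 ∧ ¬ G.Adj x2 y4 ∧
    G.Adj x3 y1 ∧ G.Adj x3 y2 ∧ G.Adj x3 y3 ∧ G.Adj x3 y4 ∧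
    G.Adj x4 y1 ∧ G.Adj x4 y2 ∧ G.Adj x4 y3 ∧ G.Adj x4 y4 ∧
    ¬ G.Adj x1 x2 ∧ ¬ G.Adj x1 x3 ∧ ¬ G.Adj x1 x4 ∧
    ¬ G.Adj x2 x3 ∧ ¬ G.Adj x2 x4 ∧ ¬ G.Adj x3 x4 ∧
    ¬ G.Adj y1 y2 ∧ ¬ G.Adj y1 y3 ∧ ¬ G.Adj y1 y4 ∧
    ¬ G.Adj y2 y3 ∧ ¬ G.Adj y2 y4 ∧ ¬ G.Adj y3 y4 ∧
    G.sign x1 y1 = false ∧ G.sign x2 y1 = false ∧ G.sign x3 y2 = false ∧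
    G.sign x4 y3 = false ∧ G.sign x4 y4 = false

/-- `G` contains a member of `D` (a 6-cycle `x₁y₁x₂y₃x₃y₂x₁` plus a negative chord
`x₂y₂`) as an induced subgraph. -/
def HasD (G : SignedBigraph V) : Prop :=
  ∃ x1 x2 x3 y1 y2 y3 : V,
    [x1, x2, x3, y1, y2, y3].Pairwise (· ≠ ·) ∧
    G.Adj x1 y1 ∧ G.Adj y1 x2 ∧ G.Adj x2 y3 ∧ G.Adj y3 x3 ∧
    G.Adj x3 y2 ∧ G.Adj y2 x1 ∧
    G.Adj x2 y2 ∧ G.sign x2 y2 = false ∧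
    ¬ G.Adj x1 y3 ∧ ¬ G.Adj x3 y1 ∧
    ¬ G.Adj x1 x2 ∧ ¬ G.Adj x1 x3 ∧ ¬ G.Adj x2 x3 ∧
    ¬ G.Adj y1 y2 ∧ ¬ G.Adj y1 y3 ∧ ¬ G.Adj y2 y3

/-- `G` contains an induced signed cycle of length at least 6. -/
def HasLongCycle (G : SignedBigraph V) : Prop :=
  HasLongInducedCycle G.graph

/-! ## Minimal forbidden patterns M₁ – M₅ for complete bigraphs -/

def HasM1 (G : SignedBigraph V) : Prop := G.HasF1

def HasM2 (G : SignedBigraph V) : Prop :=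
  ∃ u1 u2 v1 v2 v3 : V,
    [u1, u2, v1, v2, v3].Pairwise (· ≠ ·) ∧
    G.Adj u1 v1 ∧ G.Adj u1 v2 ∧ G.Adj u1 v3 ∧
    G.Adj u2 v1 ∧ G.Adj u2 v2 ∧ G.Adj u2 v3 ∧
    ¬ G.Adj u1 u2 ∧ ¬ G.Adj v1 v2 ∧ ¬ G.Adj v1 v3 ∧ ¬ G.Adj v2 v3 ∧
    G.sign u1 v1 = false ∧ G.sign u1 v2 = false ∧
    G.sign u2 v2 = false ∧ G.sign u2 v3 = false ∧
    G.sign u1 v3 = true ∧ G.sign u2 v1 = true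

def HasM3 (G : SignedBigraph V) : Prop :=
  ∃ u1 u2 v1 v2 v3 v4 : V,
    [u1, u2, v1, v2, v3, v4].Pairwise (· ≠ ·) ∧
    G.Adj u1 v1 ∧ G.Adj u1 v2 ∧ G.Adj u1 v3 ∧ G.Adj u1 v4 ∧
    G.Adj u2 v1 ∧ G.Adj u2 v2 ∧ G.Adj u2 v3 ∧ G.Adj u2 v4 ∧
    ¬ G.Adj u1 u2 ∧ ¬ G.Adj v1 v2 ∧ ¬ G.Adj v1 v3 ∧ ¬ G.Adj v1 v4 ∧
    ¬ G.Adj v2 v3 ∧ ¬ G.Adj v2 v4 ∧ ¬ G.Adj v3 v4 ∧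
    G.sign u1 v1 = false ∧ G.sign u1 v2 = false ∧
    G.sign u2 v3 = false ∧ G.sign u2 v4 = false ∧
    G.sign u1 v3 = true ∧ G.sign u1 v4 = true ∧
    G.sign u2 v1 = true ∧ G.sign u2 v2 = true

def HasM4 (G : SignedBigraph V) : Prop :=
  ∃ u1 u2 u3 v1 v2 v3 : V,
    [u1, u2, u3, v1, v2, v3].Pairwise (· ≠ ·) ∧
    G.Adj u1 v1 ∧ G.Adj u1 v2 ∧ G.Adj u1 v3 ∧
    G.Adj u2 v1 ∧ G.Adj u2 v2 ∧ G.Adj u2 v3 ∧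
    G.Adj u3 v1 ∧ G.Adj u3 v2 ∧ G.Adj u3 v3 ∧
    ¬ G.Adj u1 u2 ∧ ¬ G.Adj u1 u3 ∧ ¬ G.Adj u2 u3 ∧
    ¬ G.Adj v1 v2 ∧ ¬ G.Adj v1 v3 ∧ ¬ G.Adj v2 v3 ∧
    G.sign u1 v1 = false ∧ G.sign u2 v2 = false ∧ G.sign u3 v3 = false ∧
    G.sign u1 v2 = true ∧ G.sign u1 v3 = true ∧ G.sign u2 v1 = true ∧
    G.sign u2 v3 = true ∧ G.sign u3 v1 = true ∧ G.sign u3 v2 = true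

def HasM5 (G : SignedBigraph V) : Prop :=
  ∃ x1 x2 x3 y1 y2 y3 : V,
    [x1, x2, x3, y1, y2, y3].Pairwise (· ≠ ·) ∧
    G.Adj x1 y1 ∧ G.Adj x1 y2 ∧ G.Adj x1 y3 ∧
    G.Adj x2 y1 ∧ G.Adj x2 y2 ∧ G.Adj x2 y3 ∧
    G.Adj x3 y1 ∧ G.Adj x3 y2 ∧ G.Adj x3 y3 ∧
    ¬ G.Adj x1 x2 ∧ ¬ G.Adj x1 x3 ∧ ¬ G.Adj x2 x3 ∧
    ¬ G.Adj y1 y2 ∧ ¬ G.Adj y1 y3 ∧ ¬ G.Adj y2 y3 ∧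
    G.sign x1 y1 = false ∧ G.sign x1 y2 = false ∧
    G.sign x2 y2 = false ∧ G.sign x3 y3 = false ∧
    G.sign x1 y3 = true ∧ G.sign x2 y1 = true ∧ G.sign x2 y3 = true ∧
    G.sign x3 y1 = true ∧ G.sign x3 y2 = true

/-! ## The patterns W₁ – W₆ (relativized to an ambient vertex set `A`, with the
distinguished vertices being exactly the vertices in `S`). -/

def HasW1In (G : SignedBigraph V) (A S : Set V) : Prop :=
  ∃ u y x z : V, u ∈ A ∧ y ∈ A ∧ x ∈ A ∧ z ∈ A ∧
    [u, y, x, z].Pairwise (· ≠ ·) ∧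
    G.Adj u y ∧ G.Adj u z ∧ G.Adj x y ∧ G.Adj x z ∧
    ¬ G.Adj u x ∧ ¬ G.Adj y z ∧
    G.sign x y = false ∧ G.sign x z = false ∧
    x ∈ S ∧ u ∉ S ∧ y ∉ S ∧ z ∉ S

def HasW2In (G : SignedBigraph V) (A S : Set V) : Prop :=
  ∃ u y v z p : V, u ∈ A ∧ y ∈ A ∧ v ∈ A ∧ z ∈ A ∧ p ∈ A ∧
    [u, y, v, z, p].Pairwise (· ≠ ·) ∧
    G.Adj u y ∧ G.Adj u z ∧ G.Adj v y ∧ G.Adj v z ∧ G.Adj p v ∧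
    ¬ G.Adj u v ∧ ¬ G.Adj y z ∧ ¬ G.Adj p u ∧ ¬ G.Adj p y ∧ ¬ G.Adj p z ∧
    G.sign v y = false ∧ G.sign v z = false ∧
    p ∈ S ∧ u ∉ S ∧ y ∉ S ∧ v ∉ S ∧ z ∉ S

def HasW3In (G : SignedBigraph V) (A S : Set V) : Prop :=
  ∃ u y v z p : V, u ∈ A ∧ y ∈ A ∧ v ∈ A ∧ z ∈ A ∧ p ∈ A ∧
    [u, y, v, z, p].Pairwise (· ≠ ·) ∧
    G.Adj u y ∧ G.Adj u z ∧ G.Adj v y ∧ G.Adj v z ∧ G.Adj p v ∧ G.Adj p u ∧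
    ¬ G.Adj u v ∧ ¬ G.Adj y z ∧ ¬ G.Adj p y ∧ ¬ G.Adj p z ∧
    G.sign v y = false ∧ G.sign v z = false ∧ G.sign p u = false ∧
    p ∈ S ∧ u ∉ S ∧ y ∉ S ∧ v ∉ S ∧ z ∉ S

def HasW4In (G : SignedBigraph V) (A S : Set V) : Prop :=
  ∃ u y c z p q : V, u ∈ A ∧ y ∈ A ∧ c ∈ A ∧ z ∈ A ∧ p ∈ A ∧ q ∈ A ∧
    [u, y, c, z, p, q].Pairwise (· ≠ ·) ∧
    G.Adj u y ∧ G.Adj u z ∧ G.Adj c y ∧ G.Adj c z ∧ G.Adj p c ∧ G.Adj p u ∧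
    G.Adj q p ∧
    ¬ G.Adj u c ∧ ¬ G.Adj y z ∧ ¬ G.Adj p y ∧ ¬ G.Adj p z ∧
    ¬ G.Adj q u ∧ ¬ G.Adj q y ∧ ¬ G.Adj q c ∧ ¬ G.Adj q z ∧
    G.sign c y = false ∧ G.sign c z = false ∧ G.sign p u = false ∧
    q ∈ S ∧ u ∉ S ∧ y ∉ S ∧ c ∉ S ∧ z ∉ S ∧ p ∉ S

def HasW5In (G : SignedBigraph V) (A S : Set V) : Prop :=
  ∃ u y v z x : V, u ∈ A ∧ y ∈ A ∧ v ∈ A ∧ z ∈ A ∧ x ∈ A ∧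
    [u, y, v, z, x].Pairwise (· ≠ ·) ∧
    G.Adj u y ∧ G.Adj u z ∧ G.Adj v y ∧ G.Adj v z ∧ G.Adj x v ∧ G.Adj x u ∧
    ¬ G.Adj u v ∧ ¬ G.Adj y z ∧ ¬ G.Adj x y ∧ ¬ G.Adj x z ∧
    G.sign v y = false ∧ G.sign x u = false ∧
    x ∈ S ∧ y ∈ S ∧ u ∉ S ∧ v ∉ S ∧ z ∉ S

def HasW6In (G : SignedBigraph V) (A S : Set V) : Prop :=
  ∃ u y v z x : V, u ∈ A ∧ y ∈ A ∧ v ∈ A ∧ z ∈ A ∧ x ∈ A ∧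
    [u, y, v, z, x].Pairwise (· ≠ ·) ∧
    G.Adj u y ∧ G.Adj u z ∧ G.Adj v y ∧ G.Adj v z ∧ G.Adj x v ∧
    ¬ G.Adj u v ∧ ¬ G.Adj y z ∧ ¬ G.Adj x u ∧ ¬ G.Adj x y ∧ ¬ G.Adj x z ∧
    G.sign v y = false ∧
    x ∈ S ∧ y ∈ S ∧ u ∉ S ∧ v ∉ S ∧ z ∉ S

/-! ## Tadpoles, sums and joins -/

/-- The vertex set of a tadpole with heads `w, y, z` and path vertices `x`. -/
def tadVerts {n : ℕ} (w y z : V) (x : Fin n → V) : Set V :=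
  {w, y, z} ∪ Set.range x

/-- The data `(w, y, z, x)` forms an induced tadpole in `G`:
`w, y, z, x ⟨k⟩` induce a 4-cycle whose edges `x ⟨k⟩ y` and `x ⟨k⟩ z` are negative,
together with the induced path `x ⟨k⟩, x ⟨k-1⟩, …, x 0`; the vertex `x 0` is the end
and `w, y, z` are the heads.  If `t2 = true` the tadpole is of type 2: there is
additionally a negative edge from `w` to `x ⟨k-1⟩`.
(The paper's parameter `k ≥ 1` corresponds to `k + 1` here.) -/
structure IsInducedTadpole (G : SignedBigraph V) (k : ℕ) (t2 : Bool)
    (w y z : V) (x : Fin (k + 1) → V) : Prop where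
  t2_len : t2 = true → 1 ≤ k
  inj : Function.Injective x
  w_notmem : ∀ i, w ≠ x i
  y_notmem : ∀ i, y ≠ x i
  z_notmem : ∀ i, z ≠ x i
  wy : w ≠ y
  wz : w ≠ z
  yz : y ≠ z
  adj_wy : G.Adj w y
  adj_wz : G.Adj w z
  not_adj_yz : ¬ G.Adj y z
  adj_path : ∀ i j : Fin (k + 1), G.Adj (x i) (x j) ↔ (i.1 + 1 = j.1 ∨ j.1 + 1 = i.1)
  adj_y : ∀ i : Fin (k + 1), G.Adj y (x i) ↔ i.1 = k
  adj_z : ∀ i : Fin (k + 1), G.Adj z (x i) ↔ i.1 = k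
  adj_w : ∀ i : Fin (k + 1), G.Adj w (x i) ↔ (t2 = true ∧ i.1 + 1 = k)
  sign_y : ∀ i : Fin (k + 1), i.1 = k → G.sign (x i) y = false
  sign_z : ∀ i : Fin (k + 1), i.1 = k → G.sign (x i) z = false
  sign_w : ∀ i : Fin (k + 1), t2 = true → i.1 + 1 = k → G.sign w (x i) = false

/-- `G` contains a sum of two tadpoles (identified at their ends) as an induced
subgraph. -/
def HasTadpoleSum (G : SignedBigraph V) : Prop :=
  ∃ (k k' : ℕ) (t t' : Bool) (w y z w' y' z' : V)
    (x : Fin (k + 1) → V) (x' : Fin (k' + 1) → V),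
    G.IsInducedTadpole k t w y z x ∧ G.IsInducedTadpole k' t' w' y' z' x' ∧
    x 0 = x' 0 ∧
    tadVerts w y z x ∩ tadVerts w' y' z' x' = {x 0} ∧
    ∀ a ∈ tadVerts w y z x, ∀ b ∈ tadVerts w' y' z' x',
      a ≠ x 0 → b ≠ x' 0 → ¬ G.Adj a b

/-- `G` contains a join of two tadpoles as an induced subgraph: two disjoint induced
tadpoles such that the edges between them are exactly those joining the end of each
tadpole to all vertices of the other tadpole in the opposite partite set; all these
edges are positive, except that the edge from an end to the head `w` of the other
tadpole may be of either sign when that tadpole is a member of `W₁` (i.e. has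
`k = 0` and is of type 1), in which case the ends are required to be adjacent. -/
def HasTadpoleJoin (G : SignedBigraph V) : Prop :=
  ∃ (k k' : ℕ) (t t' : Bool) (w y z w' y' z' : V)
    (x : Fin (k + 1) → V) (x' : Fin (k' + 1) → V),
    G.IsInducedTadpole k t w y z x ∧ G.IsInducedTadpole k' t' w' y' z' x' ∧
    Disjoint (tadVerts w y z x) (tadVerts w' y' z' x') ∧
    (∀ a ∈ tadVerts w y z x, ∀ b ∈ tadVerts w' y' z' x',
      (G.Adj a b ↔ ((a = x 0 ∨ b = x' 0) ∧ G.side a ≠ G.side b))) ∧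
    ((k = 0 ∧ t = false) ∨ (k' = 0 ∧ t' = false) → G.side (x 0) ≠ G.side (x' 0)) ∧
    (∀ a ∈ tadVerts w y z x, ∀ b ∈ tadVerts w' y' z' x', G.Adj a b →
      ¬ (a = x 0 ∧ b = w' ∧ k' = 0 ∧ t' = false) →
      ¬ (a = w ∧ b = x' 0 ∧ k = 0 ∧ t = false) →
      G.sign a b = true)

/-- `G` contains a member of
`ℱ = F₁ ∪ F₂ ∪ F₃ ∪ F₄ ∪ F₅ ∪ F₆ ∪ 𝒞 ∪ D ∪ 𝒮 ∪ 𝒥` as an induced subgraph. -/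
def HasForbidden (G : SignedBigraph V) : Prop :=
  G.HasF1 ∨ G.HasF2 ∨ G.HasF3 ∨ G.HasF4 ∨ G.HasF5 ∨ G.HasF6 ∨
  G.HasLongCycle ∨ G.HasD ∨ G.HasTadpoleSum ∨ G.HasTadpoleJoin

/-- `G` is `ℱ`-free. -/
def FFree (G : SignedBigraph V) : Prop := ¬ G.HasForbidden

end SignedBigraph

/-! ## Concrete complete signed bipartite graphs (for the graphs M₁ – M₅) -/

/-- The complete bipartite graph on `Fin a ⊕ Fin b`. -/
def cbsGraph (a b : ℕ) : SimpleGraph (Fin a ⊕ Fin b) where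
  Adj u v := u.isLeft ≠ v.isLeft
  symm := ⟨fun _ _ h => Ne.symm h⟩
  loopless := ⟨fun _ h => h rfl⟩

def cbsSign {a b : ℕ} (sgn : Fin a → Fin b → Bool) :
    Fin a ⊕ Fin b → Fin a ⊕ Fin b → Bool
  | Sum.inl i, Sum.inr j => sgn i j
  | Sum.inr j, Sum.inl i => sgn i j
  | _, _ => true

/-- The complete signed bipartite graph with parts `Fin a`, `Fin b`, and signs given
by `sgn`. -/
def completeSignedBigraph (a b : ℕ) (sgn : Fin a → Fin b → Bool) :
    SignedBigraph (Fin a ⊕ Fin b) where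
  graph := cbsGraph a b
  sign := cbsSign sgn
  sign_symm := by
    intro u v
    cases u <;> cases v <;> rfl
  side := Sum.isLeft
  bipartite := fun _ _ h => h

/-- `M₁`: the all-negative 4-cycle. -/
def Mgraph1 : SignedBigraph (Fin 2 ⊕ Fin 2) :=
  completeSignedBigraph 2 2 (fun _ _ => false)

/-- `M₂`. -/
def Mgraph2 : SignedBigraph (Fin 2 ⊕ Fin 3) :=
  completeSignedBigraph 2 3
    (fun i j => ! decide ((i = 0 ∧ (j = 0 ∨ j = 1)) ∨ (i = 1 ∧ (j = 1 ∨ j = 2))))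

/-- `M₃`. -/
def Mgraph3 : SignedBigraph (Fin 2 ⊕ Fin 4) :=
  completeSignedBigraph 2 4
    (fun i j => ! decide ((i = 0 ∧ (j = 0 ∨ j = 1)) ∨ (i = 1 ∧ (j = 2 ∨ j = 3))))

/-- `M₄`. -/
def Mgraph4 : SignedBigraph (Fin 3 ⊕ Fin 3) :=
  completeSignedBigraph 3 3 (fun i j => ! decide ((i : ℕ) = (j : ℕ)))

/-- `M₅`. -/
def Mgraph5 : SignedBigraph (Fin 3 ⊕ Fin 3) :=
  completeSignedBigraph 3 3
    (fun i j => ! decide ((i = 0 ∧ (j = 0 ∨ j = 1)) ∨ (i = 1 ∧ j = 1) ∨ (i = 2 ∧ j = 2)))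

namespace SignedBigraph

variable {V : Type u}

lemma deleteEdges_empty' (G : SignedBigraph V) : G.deleteEdges ∅ = G := by
  cases G
  simp only [deleteEdges, SimpleGraph.deleteEdges_empty]

lemma deleteEdges_union (G : SignedBigraph V) (s t : Set (Sym2 V)) :
    (G.deleteEdges s).deleteEdges t = G.deleteEdges (s ∪ t) := by
  cases G
  simp only [deleteEdges, SimpleGraph.deleteEdges_deleteEdges]

lemma isChordal_nil (G : SignedBigraph V) (h : G.graph.edgeSet = ∅) : G.IsChordal := by
  refine ⟨[], List.nodup_nil, ?_, ?_⟩
  · intro e; simp [h]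
  · intro i hi; simp at hi

lemma isChordal_cons (G : SignedBigraph V) (a b : V)
    (h1 : G.SignedSimplicial a b)
    (h2 : (G.deleteEdges {s(a,b)}).IsChordal) : G.IsChordal := by
  obtain ⟨l, hnd, hcov, hsimp⟩ := h2
  have hdel : (G.deleteEdges {s(a,b)}).graph.edgeSet = G.graph.edgeSet \ {s(a,b)} :=
    SimpleGraph.edgeSet_deleteEdges _
  refine ⟨s(a,b) :: l, ?_, ?_, ?_⟩
  · refine List.nodup_cons.mpr ⟨?_, hnd⟩
    intro hmem
    have := (hcov _).mpr hmem
    rw [hdel] at this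
    exact this.2 rfl
  · intro e
    have hx := hcov e
    rw [hdel] at hx
    constructor
    · intro he
      by_cases h' : e = s(a,b)
      · simp [h']
      · exact List.mem_cons.mpr (Or.inr (hx.mp ⟨he, h'⟩))
    · intro he
      rcases List.mem_cons.mp he with h' | h'
      · subst h'; exact G.graph.mem_edgeSet.mpr h1.1
      · exact (hx.mpr h').1
  · intro i hi
    match i, hi with
    | 0, hi =>
        refine ⟨a, b, rfl, ?_⟩
        have h0 : {e : Sym2 V | e ∈ (s(a,b) :: l).take 0} = (∅ : Set (Sym2 V)) := by simp
        rw [h0, G.deleteEdges_empty']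
        exact h1
    | (i+1), hi =>
        have hi' : i < l.length := by simpa using hi
        obtain ⟨a', b', hget, hss⟩ := hsimp i hi'
        refine ⟨a', b', hget, ?_⟩
        have hset : {e : Sym2 V | e ∈ (s(a,b) :: l).take (i+1)} =
            ({s(a,b)} : Set (Sym2 V)) ∪ {e | e ∈ l.take i} := by
          ext e; simp [List.take_succ_cons]
        rw [hset, ← G.deleteEdges_union]
        exact hss

end SignedBigraph

namespace SignedBigraph

variable {V : Type u}

/-- Invariant: `G` is a complete bipartite graph between `A` (side `s`) and `B`
(side `!s`), together with a star at `x` (side `s`, not in `A`) into `C ⊆ B`;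
all `A × C` edges are positive, and all `A × B` edges avoiding one exceptional
vertex `w` are positive. -/
structure QInv (G : SignedBigraph V) (A B C : Set V) (x : V) (s : Bool) : Prop where
  hA : ∀ u ∈ A, G.side u = s
  hB : ∀ v ∈ B, G.side v = !s
  hxs : G.side x = s
  hxA : x ∉ A
  hC : C ⊆ B
  hadj : ∀ u v, G.Adj u v ↔
    ((u ∈ A ∧ v ∈ B) ∨ (v ∈ A ∧ u ∈ B) ∨ (u = x ∧ v ∈ C) ∨ (v = x ∧ u ∈ C))
  hpos : ∀ u ∈ A, ∀ v ∈ C, G.sign u v = true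
  hw : ∃ w, ∀ u ∈ A, ∀ v ∈ B, u ≠ w → v ≠ w → G.sign u v = true

lemma QInv.peel {G : SignedBigraph V} {A B C : Set V} {x : V} {s : Bool}
    (q : QInv G A B C x s) {c : V} (hc : c ∈ C) :
    G.SignedSimplicial x c ∧ QInv (G.deleteEdges {s(x,c)}) A B (C \ {c}) x s := by
  have hsne : s ≠ !s := by cases s <;> simp
  have hxB : x ∉ B := fun h => hsne ((q.hxs).symm.trans (q.hB x h))
  have hxC : x ∉ C := fun h => hxB (q.hC h)
  have hcB : c ∈ B := q.hC hc
  have hcs : G.side c = !s := q.hB c hcB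
  have hcA : c ∉ A := fun h => hsne ((q.hA c h).symm.trans hcs)
  have hcx : c ≠ x := fun h => hsne ((q.hxs).symm.trans (h ▸ hcs))
  have hadjxc : G.Adj x c := (q.hadj x c).mpr (Or.inr (Or.inr (Or.inl ⟨rfl, hc⟩)))
  -- classification of vertices in the edge neighbourhood of x c
  have hmem : ∀ p ∈ G.edgeNbhd x c, p ∈ A ∨ p ∈ C := by
    intro p hp
    obtain ⟨hp1, hp2⟩ := hp
    have hpx : p ≠ x := fun h => hp2 (by simp [h])
    have hpc : p ≠ c := fun h => hp2 (by simp [h])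
    rcases hp1 with h | h
    · -- G.Adj x p
      rcases (q.hadj x p).mp h with ⟨h1, _⟩ | ⟨_, h2⟩ | ⟨_, h3⟩ | ⟨h4, _⟩
      · exact absurd h1 q.hxA
      · exact absurd h2 hxB
      · exact Or.inr h3
      · exact absurd h4.symm hpx.symm
    · -- G.Adj c p
      rcases (q.hadj c p).mp h with ⟨h1, _⟩ | ⟨h2, _⟩ | ⟨h3, _⟩ | ⟨h4, _⟩
      · exact absurd h1 hcA
      · exact Or.inl h2
      · exact absurd h3 hcx
      · exact absurd h4 hpx
  have key : ∀ p ∈ G.edgeNbhd x c, ∀ r ∈ G.edgeNbhd x c,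
      G.side p ≠ G.side r → G.Adj p r ∧ G.sign p r = true := by
    intro p hp r hr hne
    rcases hmem p hp with hpA | hpC <;> rcases hmem r hr with hrA | hrC
    · exact absurd ((q.hA p hpA).trans (q.hA r hrA).symm) hne
    · exact ⟨(q.hadj p r).mpr (Or.inl ⟨hpA, q.hC hrC⟩), q.hpos p hpA r hrC⟩
    · refine ⟨(q.hadj p r).mpr (Or.inr (Or.inl ⟨hrA, q.hC hpC⟩)), ?_⟩
      rw [G.sign_symm]; exact q.hpos r hrA p hpC
    · exact absurd ((q.hB p (q.hC hpC)).trans (q.hB r (q.hC hrC)).symm) hne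
  refine ⟨⟨hadjxc, key⟩, ?_⟩
  have hdadj : ∀ u v, (G.deleteEdges {s(x,c)}).Adj u v ↔ G.Adj u v ∧ s(u,v) ≠ s(x,c) := by
    intro u v
    exact SimpleGraph.deleteEdges_adj
  refine ⟨q.hA, q.hB, q.hxs, q.hxA, fun v hv => q.hC hv.1, ?_, ?_, ?_⟩
  · intro u v
    rw [hdadj]
    constructor
    · rintro ⟨h, hne⟩
      rcases (q.hadj u v).mp h with h1 | h2 | ⟨h3, h3'⟩ | ⟨h4, h4'⟩
      · exact Or.inl h1
      · exact Or.inr (Or.inl h2)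
      · refine Or.inr (Or.inr (Or.inl ⟨h3, h3', fun hvc => hne ?_⟩))
        rw [h3, hvc]
      · refine Or.inr (Or.inr (Or.inr ⟨h4, h4', fun huc => hne ?_⟩))
        rw [h4, huc, Sym2.eq_swap]
    · intro h
      have heq : ∀ p r : V, s(p, r) = s(x, c) → (p = x ∧ r = c) ∨ (p = c ∧ r = x) :=
        fun p r hpr => Sym2.eq_iff.mp hpr
      rcases h with ⟨h1, h2⟩ | ⟨h1, h2⟩ | ⟨h1, h2, h3⟩ | ⟨h1, h2, h3⟩
      · refine ⟨(q.hadj u v).mpr (Or.inl ⟨h1, h2⟩), fun he => ?_⟩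
        rcases heq u v he with ⟨hu, _⟩ | ⟨hu, _⟩
        · exact q.hxA (hu ▸ h1)
        · exact hcA (hu ▸ h1)
      · refine ⟨(q.hadj u v).mpr (Or.inr (Or.inl ⟨h1, h2⟩)), fun he => ?_⟩
        rcases heq u v he with ⟨_, hv⟩ | ⟨_, hv⟩
        · exact hcA (hv ▸ h1)
        · exact q.hxA (hv ▸ h1)
      · refine ⟨(q.hadj u v).mpr (Or.inr (Or.inr (Or.inl ⟨h1, h2⟩))), fun he => ?_⟩
        rcases heq u v he with ⟨_, hv⟩ | ⟨hu, _⟩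
        · exact h3 hv
        · exact hcx (h1 ▸ hu).symm
      · refine ⟨(q.hadj u v).mpr (Or.inr (Or.inr (Or.inr ⟨h1, h2⟩))), fun he => ?_⟩
        rcases heq u v he with ⟨hu, _⟩ | ⟨hu, _⟩
        · exact hxC (hu ▸ h2)
        · exact h3 hu
  · exact fun u hu v hv => q.hpos u hu v hv.1
  · exact q.hw

end SignedBigraph

namespace SignedBigraph

variable {V : Type u}

/-- Re-parametrize a `QInv` instance so that the star set is nonempty,
assuming the graph has at least one edge. -/
lemma QInv.reparam {G : SignedBigraph V} {A B C : Set V} {x : V} {s : Bool}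
    (q : QInv G A B C x s) {u v : V} (huv : G.Adj u v) :
    ∃ (A' B' C' : Set V) (x' : V) (s' : Bool), QInv G A' B' C' x' s' ∧ C'.Nonempty := by
  have hsne : ∀ t : Bool, t ≠ !t := by decide
  rcases Set.eq_empty_or_nonempty C with hC0 | hCne
  swap
  · exact ⟨A, B, C, x, s, q, hCne⟩
  subst hC0
  -- get a vertex in A and a vertex in B
  obtain ⟨a0, b0, ha0, hb0⟩ : ∃ a0 b0, a0 ∈ A ∧ b0 ∈ B := by
    rcases (q.hadj u v).mp huv with ⟨h1, h2⟩ | ⟨h1, h2⟩ | ⟨_, h⟩ | ⟨_, h⟩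
    · exact ⟨u, v, h1, h2⟩
    · exact ⟨v, u, h1, h2⟩
    · exact absurd h (Set.notMem_empty _)
    · exact absurd h (Set.notMem_empty _)
  obtain ⟨w, hw⟩ := q.hw
  have hABdisj : ∀ p, p ∈ A → p ∈ B → False := by
    intro p h1 h2
    exact hsne s ((q.hA p h1).symm.trans (q.hB p h2))
  by_cases hwB : w ∈ B
  · -- star at w ∈ B into A
    refine ⟨B \ {w}, A, A, w, !s, ⟨?_, ?_, ?_, ?_, ?_, ?_, ?_, ?_⟩, a0, ha0⟩
    · exact fun p hp => q.hB p hp.1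
    · intro p hp; rw [Bool.not_not]; exact q.hA p hp
    · exact q.hB w hwB
    · exact fun h => h.2 rfl
    · exact fun p hp => hp
    · intro p r
      rw [q.hadj]
      have hsplit : ∀ z, z ∈ B ↔ (z ∈ B \ {w} ∨ z = w) := by
        intro z
        constructor
        · intro hz; by_cases hzw : z = w
          · exact Or.inr hzw
          · exact Or.inl ⟨hz, hzw⟩
        · rintro (hz | rfl); exacts [hz.1, hwB]
      simp only [Set.mem_empty_iff_false, and_false, false_and, or_false]
      rw [hsplit p, hsplit r]
      tauto
    · intro p hp r hr
      rw [G.sign_symm]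
      refine hw r hr p hp.1 (fun h => ?_) hp.2
      exact hABdisj w (h ▸ hr) hwB
    · refine ⟨w, fun p hp r hr hpw _ => ?_⟩
      rw [G.sign_symm]
      refine hw r hr p hp.1 (fun h => ?_) hpw
      exact hABdisj w (h ▸ hr) hwB
  · -- star at some z ∈ A into B
    obtain ⟨z, hzA, hz⟩ : ∃ z, z ∈ A ∧ ∀ p ∈ A, p ≠ z → p ≠ w := by
      by_cases hwA : w ∈ A
      · exact ⟨w, hwA, fun p _ hp => hp⟩
      · exact ⟨a0, ha0, fun p hp _ h => hwA (h ▸ hp)⟩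
    refine ⟨A \ {z}, B, B, z, s, ⟨?_, ?_, ?_, ?_, ?_, ?_, ?_, ?_⟩, b0, hb0⟩
    · exact fun p hp => q.hA p hp.1
    · exact q.hB
    · exact q.hA z hzA
    · exact fun h => h.2 rfl
    · exact fun p hp => hp
    · intro p r
      rw [q.hadj]
      have hsplit : ∀ y, y ∈ A ↔ (y ∈ A \ {z} ∨ y = z) := by
        intro y
        constructor
        · intro hy; by_cases hyz : y = z
          · exact Or.inr hyz
          · exact Or.inl ⟨hy, hyz⟩
        · rintro (hy | rfl); exacts [hy.1, hzA]
      simp only [Set.mem_empty_iff_false, and_false, false_and, or_false]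
      rw [hsplit p, hsplit r]
      tauto
    · intro p hp r hr
      exact hw p hp.1 r hr (hz p hp.1 hp.2) (fun h => hwB (h ▸ hr))
    · exact ⟨w, fun p hp r hr hpw _ => hw p hp.1 r hr hpw (fun h => hwB (h ▸ hr))⟩

lemma QInv.isChordal [Fintype V] :
    ∀ (n : ℕ) (G : SignedBigraph V) (A B C : Set V) (x : V) (s : Bool),
      QInv G A B C x s → G.graph.edgeSet.ncard ≤ n → G.IsChordal := by
  intro n
  induction n with
  | zero =>
    intro G A B C x s q hn
    apply isChordal_nil
    have h0 : G.graph.edgeSet.ncard = 0 := Nat.le_zero.mp hn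
    exact (Set.ncard_eq_zero (Set.toFinite _)).mp h0
  | succ n ih =>
    intro G A B C x s q hn
    by_cases hE : G.graph.edgeSet = ∅
    · exact isChordal_nil G hE
    · obtain ⟨u, v, huv⟩ : ∃ u v, G.Adj u v := by
        obtain ⟨e, he⟩ := Set.nonempty_iff_ne_empty.mpr hE
        revert he
        refine Sym2.ind (fun u v h => ⟨u, v, G.graph.mem_edgeSet.mp h⟩) e
      obtain ⟨A', B', C', x', s', q', c, hc⟩ := q.reparam huv
      obtain ⟨hss, q''⟩ := q'.peel hc
      refine isChordal_cons G x' c hss (ih _ A' B' (C' \ {c}) x' s' q'' ?_)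
      have hmem : s(x', c) ∈ G.graph.edgeSet := G.graph.mem_edgeSet.mpr hss.1
      have hdel : (G.deleteEdges {s(x',c)}).graph.edgeSet = G.graph.edgeSet \ {s(x',c)} :=
        SimpleGraph.edgeSet_deleteEdges _
      rw [hdel, Set.ncard_diff_singleton_of_mem hmem]
      omega

end SignedBigraph

open SignedBigraph in
/-- Lemma 2.1: a signed complete bigraph with a signed simplicial
edge is a chordal signed bigraph. -/
theorem signedCompleteBigraph_isChordal_of_signedSimplicial
    {V : Type u} [Fintype V] (G : SignedBigraph V)
    (hcomp : ∀ a b : V, G.side a ≠ G.side b → G.Adj a b)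
    (h : ∃ a b : V, G.SignedSimplicial a b) :
    G.IsChordal := by
  classical
  obtain ⟨a, b, hss⟩ := h
  have hab : G.Adj a b := hss.1
  have hbip : G.side a ≠ G.side b := G.bipartite hab
  have hsne : ∀ t : Bool, t ≠ !t := by decide
  have flip : ∀ t t' : Bool, t ≠ t' → t = !t' := by decide
  have flip2 : ∀ t t' : Bool, t ≠ !t' → t = t' := by decide
  have hsb : G.side b = !(G.side a) := flip _ _ (Ne.symm hbip)
  have habne : a ≠ b := fun hh => hbip (by rw [hh])
  -- membership facts in the edge neighbourhood of a b
  have hN : ∀ w, G.side w = G.side a → w ≠ a → w ∈ G.edgeNbhd a b := by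
    intro w hw hwa
    have hwb : w ≠ b := fun hh => hsne (G.side a) (hw.symm.trans (hh ▸ hsb))
    refine ⟨Or.inr (hcomp b w (by rw [hsb, hw]; exact (hsne _).symm)), ?_⟩
    simp [hwa, hwb]
  have hN' : ∀ w, G.side w = !(G.side a) → w ≠ b → w ∈ G.edgeNbhd a b := by
    intro w hw hwb
    have hwa : w ≠ a := fun hh => hsne (G.side a) (by rw [hh] at hw; exact hw)
    refine ⟨Or.inl (hcomp a w (by rw [hw]; exact hsne _)), ?_⟩
    simp [hwa, hwb]
  have hposAB : ∀ u, G.side u = G.side a → u ≠ a → ∀ v, G.side v = !(G.side a) → v ≠ b →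
      G.sign u v = true := by
    intro u hu1 hu2 v hv1 hv2
    refine (hss.2 u (hN u hu1 hu2) v (hN' v hv1 hv2) ?_).2
    rw [hu1, hv1]; exact hsne _
  apply isChordal_cons G a b hss
  refine QInv.isChordal ((G.deleteEdges {s(a,b)}).graph.edgeSet.ncard)
    (G.deleteEdges {s(a,b)})
    {u | G.side u = G.side a ∧ u ≠ a} {v | G.side v = !(G.side a)}
    {v | G.side v = !(G.side a) ∧ v ≠ b} a (G.side a)
    ⟨?_, ?_, ?_, ?_, ?_, ?_, ?_, ?_⟩ le_rfl
  · exact fun u hu => hu.1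
  · exact fun v hv => hv
  · rfl
  · exact fun hh => hh.2 rfl
  · exact fun v hv => hv.1
  · intro u v
    have hd : (G.deleteEdges {s(a,b)}).Adj u v ↔ (G.Adj u v ∧ ¬ s(u,v) ∈ ({s(a,b)} : Set (Sym2 V))) :=
      SimpleGraph.deleteEdges_adj
    rw [hd]
    have heq : ∀ p r : V, s(p, r) = s(a, b) → (p = a ∧ r = b) ∨ (p = b ∧ r = a) :=
      fun p r hh => Sym2.eq_iff.mp hh
    constructor
    · rintro ⟨hadj, hne⟩
      have hne' : s(u, v) ≠ s(a, b) := by simpa using hne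
      have hsuv : G.side u ≠ G.side v := G.bipartite hadj
      by_cases hu : G.side u = G.side a
      · have hv : G.side v = !(G.side a) :=
          flip _ _ (fun hh => hsuv (hu.trans hh.symm))
        by_cases hua : u = a
        · by_cases hvb : v = b
          · exact absurd (by rw [hua, hvb]) hne'
          · exact Or.inr (Or.inr (Or.inl ⟨hua, hv, hvb⟩))
        · exact Or.inl ⟨⟨hu, hua⟩, hv⟩
      · have hu' : G.side u = !(G.side a) := flip _ _ hu
        have hv : G.side v = G.side a :=
          flip2 _ _ (fun hh => hsuv (hu'.trans hh.symm))
        by_cases hva : v = a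
        · by_cases hub : u = b
          · exact absurd (by rw [hva, hub, Sym2.eq_swap]) hne'
          · exact Or.inr (Or.inr (Or.inr ⟨hva, hu', hub⟩))
        · exact Or.inr (Or.inl ⟨⟨hv, hva⟩, hu'⟩)
    · intro hcase
      have hgoal : G.Adj u v ∧ s(u, v) ≠ s(a, b) → G.Adj u v ∧ ¬ s(u,v) ∈ ({s(a,b)} : Set (Sym2 V)) := by
        intro hh; exact ⟨hh.1, by simpa using hh.2⟩
      apply hgoal
      rcases hcase with ⟨⟨hu1, hu2⟩, hv1⟩ | ⟨⟨hv1, hv2⟩, hu1⟩ | ⟨hu1, hv1, hv2⟩ | ⟨hv1, hu1, hu2⟩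
      · refine ⟨hcomp u v (by rw [hu1, hv1]; exact hsne _), fun he => ?_⟩
        rcases heq u v he with ⟨hua, _⟩ | ⟨hub, _⟩
        · exact hu2 hua
        · exact hsne (G.side a) (hu1.symm.trans (hub ▸ hsb))
      · refine ⟨hcomp u v (by rw [hu1, hv1]; exact (hsne _).symm), fun he => ?_⟩
        rcases heq u v he with ⟨_, hvb⟩ | ⟨_, hva⟩
        · exact hsne (G.side a) (hv1.symm.trans (hvb ▸ hsb))
        · exact hv2 hva
      · refine ⟨hcomp u v (by rw [hu1, hv1]; exact hsne _), fun he => ?_⟩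
        rcases heq u v he with ⟨_, hvb⟩ | ⟨hub, _⟩
        · exact hv2 hvb
        · exact habne (hu1.symm.trans hub)
      · refine ⟨hcomp u v (by rw [hu1, hv1]; exact (hsne _).symm), fun he => ?_⟩
        rcases heq u v he with ⟨hua, _⟩ | ⟨hub, _⟩
        · exact hsne (G.side a) (by rw [hua] at hu1; exact hu1)
        · exact hu2 hub
  · exact fun u hu v hv => hposAB u hu.1 hu.2 v hv.1 hv.2
  · exact ⟨b, fun u hu v hv hub hvb => hposAB u hu.1 hu.2 v hv hvb⟩
end

section
/- Let Ĝ be a signed complete bigraph, i.e. a signed bigraph whose underlying graph is a complete bipartite graph. Then Ĝ is a chordal signed bigraph if and only if Ĝ does not contain any signed graph belonging to F_1 ∪ F_2 ∪ F_3 ∪ F_4 as an induced subgraph. -/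
universe u

namespace SignedBigraph
variable {V : Type u}

lemma edgeNbhd_comm (G : SignedBigraph V) (a b : V) : G.edgeNbhd a b = G.edgeNbhd b a := by
  unfold edgeNbhd
  rw [Set.union_comm, Set.pair_comm]

lemma contra_helper (G : SignedBigraph V) (S : Set (Sym2 V)) {a b u v c d : V}
    (hs : (G.deleteEdges S).SignedSimplicial a b)
    (hab : s(a,b) = s(u,v))
    (huc : G.Adj u c) (hucS : s(u,c) ∉ S)
    (hvd : G.Adj v d) (hvdS : s(v,d) ∉ S)
    (hcu : c ≠ u) (hcv : c ≠ v) (hdu : d ≠ u) (hdv : d ≠ v)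
    (hside : G.side c ≠ G.side d) (hsign : G.sign c d = false) : False := by
  have hnb : (G.deleteEdges S).edgeNbhd a b = (G.deleteEdges S).edgeNbhd u v := by
    rcases Sym2.eq_iff.mp hab with ⟨rfl, rfl⟩ | ⟨rfl, rfl⟩
    · rfl
    · exact edgeNbhd_comm _ _ _
  have hc : c ∈ (G.deleteEdges S).edgeNbhd u v := by
    refine ⟨Or.inl ?_, ?_⟩
    · exact SimpleGraph.deleteEdges_adj.mpr ⟨huc, hucS⟩
    · simp [hcu, hcv]
  have hd : d ∈ (G.deleteEdges S).edgeNbhd u v := by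
    refine ⟨Or.inr ?_, ?_⟩
    · exact SimpleGraph.deleteEdges_adj.mpr ⟨hvd, hvdS⟩
    · simp [hdu, hdv]
  obtain ⟨_, hsg⟩ := hs.2 c (hnb.symm ▸ hc) d (hnb.symm ▸ hd) hside
  rw [show (G.deleteEdges S).sign = G.sign from rfl, hsign] at hsg
  exact Bool.false_ne_true hsg

lemma exists_min_step (l E : List (Sym2 V)) (hne : E ≠ [])
    (hE : ∀ e ∈ E, e ∈ l) :
    ∃ (n : ℕ) (h : n < l.length), l.get ⟨n, h⟩ ∈ E ∧ ∀ e ∈ E, e ∉ l.take n := by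
  classical
  have hex : ∃ n, ∃ h : n < l.length, l.get ⟨n, h⟩ ∈ E := by
    obtain ⟨e, he⟩ := List.exists_mem_of_ne_nil E hne
    obtain ⟨i, hei⟩ := List.mem_iff_get.mp (hE e he)
    exact ⟨i.1, i.2, by rw [hei]; exact he⟩
  obtain ⟨h, hget⟩ := Nat.find_spec hex
  refine ⟨Nat.find hex, h, hget, ?_⟩
  intro e he hmem
  obtain ⟨i, hi, hei⟩ := List.mem_take_iff_getElem.mp hmem
  have hilt : i < Nat.find hex := lt_of_lt_of_le hi (min_le_left _ _)
  have hil : i < l.length := lt_of_lt_of_le hi (min_le_right _ _)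
  exact Nat.find_min hex hilt ⟨hil, by rw [List.get_eq_getElem, hei]; exact he⟩


lemma IsChordal.no_F1 {G : SignedBigraph V} (hc : G.IsChordal) : ¬ G.HasF1 := by
  rintro ⟨u1, u2, v1, v2, hpw, h11, h12, h21, h22, huu, hvv, s11, s12, s21, s22⟩
  obtain ⟨l, hnd, hmem, hstep⟩ := hc
  classical
  set E : List (Sym2 V) := [s(u1,v1), s(u1,v2), s(u2,v1), s(u2,v2)] with hEdef
  have hE : ∀ e ∈ E, e ∈ l := by
    intro e he
    simp only [hEdef, List.mem_cons, List.not_mem_nil, or_false] at he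
    rcases he with rfl | rfl | rfl | rfl
    exacts [(hmem _).mp h11, (hmem _).mp h12, (hmem _).mp h21, (hmem _).mp h22]
  obtain ⟨n, hn, hgetE, hmin⟩ := exists_min_step l E (by simp [hEdef]) hE
  obtain ⟨a, b, hget, hsimp⟩ := hstep n hn
  rw [hget] at hgetE
  simp only [hEdef, List.mem_cons, List.not_mem_nil, or_false] at hgetE
  simp only [List.pairwise_cons, List.mem_cons, List.not_mem_nil, or_false,
    forall_eq_or_imp, forall_eq, List.Pairwise.nil, and_true] at hpw
  obtain ⟨⟨n12, n13, n14⟩, ⟨n23, n24⟩, n34, -⟩ := hpw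
  rcases hgetE with h | h | h | h
  · exact G.contra_helper _ hsimp h h12 (hmin _ (by simp [hEdef]))
      h21.symm (by rw [Sym2.eq_swap]; exact hmin _ (by simp [hEdef]))
      n14.symm n34.symm n12.symm n23 ((G.bipartite h22).symm) ((G.sign_symm v2 u2).trans s22)
  · exact G.contra_helper _ hsimp h h11 (hmin _ (by simp [hEdef]))
      h22.symm (by rw [Sym2.eq_swap]; exact hmin _ (by simp [hEdef]))
      n13.symm n34 n12.symm n24 ((G.bipartite h21).symm) ((G.sign_symm v1 u2).trans s21)
  · exact G.contra_helper _ hsimp h h22 (hmin _ (by simp [hEdef]))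
      h11.symm (by rw [Sym2.eq_swap]; exact hmin _ (by simp [hEdef]))
      n24.symm n34.symm n12 n13 ((G.bipartite h12).symm) ((G.sign_symm v2 u1).trans s12)
  · exact G.contra_helper _ hsimp h h21 (hmin _ (by simp [hEdef]))
      h12.symm (by rw [Sym2.eq_swap]; exact hmin _ (by simp [hEdef]))
      n23.symm n34 n12 n14 ((G.bipartite h11).symm) ((G.sign_symm v1 u1).trans s11)

lemma IsChordal.no_F2 {G : SignedBigraph V} (hc : G.IsChordal) : ¬ G.HasF2 := by
  rintro ⟨u1, u2, v1, v2, v3, hpw, h11, h12, h13, h21, h22, h23, na0, na1, na2, na3, s11, s12, s22, s23⟩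
  obtain ⟨l, hnd, hmem, hstep⟩ := hc
  classical
  set E : List (Sym2 V) := [s(u1,v1), s(u1,v2), s(u1,v3), s(u2,v1), s(u2,v2), s(u2,v3)] with hEdef
  have hE : ∀ e ∈ E, e ∈ l := by
    intro e he
    simp only [hEdef, List.mem_cons, List.not_mem_nil, or_false] at he
    rcases he with rfl | rfl | rfl | rfl | rfl | rfl
    exacts [(hmem _).mp h11, (hmem _).mp h12, (hmem _).mp h13, (hmem _).mp h21, (hmem _).mp h22, (hmem _).mp h23]
  obtain ⟨n, hn, hgetE, hmin⟩ := exists_min_step l E (by simp [hEdef]) hE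
  obtain ⟨a, b, hget, hsimp⟩ := hstep n hn
  rw [hget] at hgetE
  simp only [hEdef, List.mem_cons, List.not_mem_nil, or_false] at hgetE
  simp only [List.pairwise_cons, List.mem_cons, List.not_mem_nil, or_false,
    forall_eq_or_imp, forall_eq, List.Pairwise.nil, and_true] at hpw
  obtain ⟨⟨n12, n13, n14, n15⟩, ⟨n23, n24, n25⟩, ⟨n34, n35⟩, n45, -⟩ := hpw
  rcases hgetE with h | h | h | h | h | h
  · exact G.contra_helper _ hsimp h h12 (hmin _ (by simp [hEdef]))
      h21.symm (by rw [Sym2.eq_swap]; exact hmin _ (by simp [hEdef]))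
      n14.symm n34.symm n12.symm n23 ((G.bipartite h22).symm) ((G.sign_symm v2 u2).trans s22)
  · exact G.contra_helper _ hsimp h h13 (hmin _ (by simp [hEdef]))
      h22.symm (by rw [Sym2.eq_swap]; exact hmin _ (by simp [hEdef]))
      n15.symm n45.symm n12.symm n24 ((G.bipartite h23).symm) ((G.sign_symm v3 u2).trans s23)
  · exact G.contra_helper _ hsimp h h12 (hmin _ (by simp [hEdef]))
      h23.symm (by rw [Sym2.eq_swap]; exact hmin _ (by simp [hEdef]))
      n14.symm n45 n12.symm n25 ((G.bipartite h22).symm) ((G.sign_symm v2 u2).trans s22)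
  · exact G.contra_helper _ hsimp h h22 (hmin _ (by simp [hEdef]))
      h11.symm (by rw [Sym2.eq_swap]; exact hmin _ (by simp [hEdef]))
      n24.symm n34.symm n12 n13 ((G.bipartite h12).symm) ((G.sign_symm v2 u1).trans s12)
  · exact G.contra_helper _ hsimp h h21 (hmin _ (by simp [hEdef]))
      h12.symm (by rw [Sym2.eq_swap]; exact hmin _ (by simp [hEdef]))
      n23.symm n34 n12 n14 ((G.bipartite h11).symm) ((G.sign_symm v1 u1).trans s11)
  · exact G.contra_helper _ hsimp h h21 (hmin _ (by simp [hEdef]))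
      h13.symm (by rw [Sym2.eq_swap]; exact hmin _ (by simp [hEdef]))
      n23.symm n35 n12 n15 ((G.bipartite h11).symm) ((G.sign_symm v1 u1).trans s11)

lemma IsChordal.no_F3 {G : SignedBigraph V} (hc : G.IsChordal) : ¬ G.HasF3 := by
  rintro ⟨u1, u2, v1, v2, v3, v4, hpw, h11, h12, h13, h14, h21, h22, h23, h24, na0, na1, na2, na3, na4, na5, na6, s11, s12, s23, s24⟩
  obtain ⟨l, hnd, hmem, hstep⟩ := hc
  classical
  set E : List (Sym2 V) := [s(u1,v1), s(u1,v2), s(u1,v3), s(u1,v4), s(u2,v1), s(u2,v2), s(u2,v3), s(u2,v4)] with hEdef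
  have hE : ∀ e ∈ E, e ∈ l := by
    intro e he
    simp only [hEdef, List.mem_cons, List.not_mem_nil, or_false] at he
    rcases he with rfl | rfl | rfl | rfl | rfl | rfl | rfl | rfl
    exacts [(hmem _).mp h11, (hmem _).mp h12, (hmem _).mp h13, (hmem _).mp h14, (hmem _).mp h21, (hmem _).mp h22, (hmem _).mp h23, (hmem _).mp h24]
  obtain ⟨n, hn, hgetE, hmin⟩ := exists_min_step l E (by simp [hEdef]) hE
  obtain ⟨a, b, hget, hsimp⟩ := hstep n hn
  rw [hget] at hgetE
  simp only [hEdef, List.mem_cons, List.not_mem_nil, or_false] at hgetE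
  simp only [List.pairwise_cons, List.mem_cons, List.not_mem_nil, or_false,
    forall_eq_or_imp, forall_eq, List.Pairwise.nil, and_true] at hpw
  obtain ⟨⟨n12, n13, n14, n15, n16⟩, ⟨n23, n24, n25, n26⟩, ⟨n34, n35, n36⟩, ⟨n45, n46⟩, n56, -⟩ := hpw
  rcases hgetE with h | h | h | h | h | h | h | h
  · exact G.contra_helper _ hsimp h h13 (hmin _ (by simp [hEdef]))
      h21.symm (by rw [Sym2.eq_swap]; exact hmin _ (by simp [hEdef]))
      n15.symm n35.symm n12.symm n23 ((G.bipartite h23).symm) ((G.sign_symm v3 u2).trans s23)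
  · exact G.contra_helper _ hsimp h h13 (hmin _ (by simp [hEdef]))
      h22.symm (by rw [Sym2.eq_swap]; exact hmin _ (by simp [hEdef]))
      n15.symm n45.symm n12.symm n24 ((G.bipartite h23).symm) ((G.sign_symm v3 u2).trans s23)
  · exact G.contra_helper _ hsimp h h14 (hmin _ (by simp [hEdef]))
      h23.symm (by rw [Sym2.eq_swap]; exact hmin _ (by simp [hEdef]))
      n16.symm n56.symm n12.symm n25 ((G.bipartite h24).symm) ((G.sign_symm v4 u2).trans s24)
  · exact G.contra_helper _ hsimp h h13 (hmin _ (by simp [hEdef]))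
      h24.symm (by rw [Sym2.eq_swap]; exact hmin _ (by simp [hEdef]))
      n15.symm n56 n12.symm n26 ((G.bipartite h23).symm) ((G.sign_symm v3 u2).trans s23)
  · exact G.contra_helper _ hsimp h h22 (hmin _ (by simp [hEdef]))
      h11.symm (by rw [Sym2.eq_swap]; exact hmin _ (by simp [hEdef]))
      n24.symm n34.symm n12 n13 ((G.bipartite h12).symm) ((G.sign_symm v2 u1).trans s12)
  · exact G.contra_helper _ hsimp h h21 (hmin _ (by simp [hEdef]))
      h12.symm (by rw [Sym2.eq_swap]; exact hmin _ (by simp [hEdef]))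
      n23.symm n34 n12 n14 ((G.bipartite h11).symm) ((G.sign_symm v1 u1).trans s11)
  · exact G.contra_helper _ hsimp h h21 (hmin _ (by simp [hEdef]))
      h13.symm (by rw [Sym2.eq_swap]; exact hmin _ (by simp [hEdef]))
      n23.symm n35 n12 n15 ((G.bipartite h11).symm) ((G.sign_symm v1 u1).trans s11)
  · exact G.contra_helper _ hsimp h h21 (hmin _ (by simp [hEdef]))
      h14.symm (by rw [Sym2.eq_swap]; exact hmin _ (by simp [hEdef]))
      n23.symm n36 n12 n16 ((G.bipartite h11).symm) ((G.sign_symm v1 u1).trans s11)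

lemma IsChordal.no_F4 {G : SignedBigraph V} (hc : G.IsChordal) : ¬ G.HasF4 := by
  rintro ⟨u1, u2, u3, v1, v2, v3, hpw, h11, h12, h13, h21, h22, h23, h31, h32, h33, na0, na1, na2, na3, na4, na5, s11, s22, s33⟩
  obtain ⟨l, hnd, hmem, hstep⟩ := hc
  classical
  set E : List (Sym2 V) := [s(u1,v1), s(u1,v2), s(u1,v3), s(u2,v1), s(u2,v2), s(u2,v3), s(u3,v1), s(u3,v2), s(u3,v3)] with hEdef
  have hE : ∀ e ∈ E, e ∈ l := by
    intro e he
    simp only [hEdef, List.mem_cons, List.not_mem_nil, or_false] at he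
    rcases he with rfl | rfl | rfl | rfl | rfl | rfl | rfl | rfl | rfl
    exacts [(hmem _).mp h11, (hmem _).mp h12, (hmem _).mp h13, (hmem _).mp h21, (hmem _).mp h22, (hmem _).mp h23, (hmem _).mp h31, (hmem _).mp h32, (hmem _).mp h33]
  obtain ⟨n, hn, hgetE, hmin⟩ := exists_min_step l E (by simp [hEdef]) hE
  obtain ⟨a, b, hget, hsimp⟩ := hstep n hn
  rw [hget] at hgetE
  simp only [hEdef, List.mem_cons, List.not_mem_nil, or_false] at hgetE
  simp only [List.pairwise_cons, List.mem_cons, List.not_mem_nil, or_false,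
    forall_eq_or_imp, forall_eq, List.Pairwise.nil, and_true] at hpw
  obtain ⟨⟨n12, n13, n14, n15, n16⟩, ⟨n23, n24, n25, n26⟩, ⟨n34, n35, n36⟩, ⟨n45, n46⟩, n56, -⟩ := hpw
  rcases hgetE with h | h | h | h | h | h | h | h | h
  · exact G.contra_helper _ hsimp h h12 (hmin _ (by simp [hEdef]))
      h21.symm (by rw [Sym2.eq_swap]; exact hmin _ (by simp [hEdef]))
      n15.symm n45.symm n12.symm n24 ((G.bipartite h22).symm) ((G.sign_symm v2 u2).trans s22)
  · exact G.contra_helper _ hsimp h h13 (hmin _ (by simp [hEdef]))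
      h32.symm (by rw [Sym2.eq_swap]; exact hmin _ (by simp [hEdef]))
      n16.symm n56.symm n13.symm n35 ((G.bipartite h33).symm) ((G.sign_symm v3 u3).trans s33)
  · exact G.contra_helper _ hsimp h h12 (hmin _ (by simp [hEdef]))
      h23.symm (by rw [Sym2.eq_swap]; exact hmin _ (by simp [hEdef]))
      n15.symm n56 n12.symm n26 ((G.bipartite h22).symm) ((G.sign_symm v2 u2).trans s22)
  · exact G.contra_helper _ hsimp h h23 (hmin _ (by simp [hEdef]))
      h31.symm (by rw [Sym2.eq_swap]; exact hmin _ (by simp [hEdef]))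
      n26.symm n46.symm n23.symm n34 ((G.bipartite h33).symm) ((G.sign_symm v3 u3).trans s33)
  · exact G.contra_helper _ hsimp h h21 (hmin _ (by simp [hEdef]))
      h12.symm (by rw [Sym2.eq_swap]; exact hmin _ (by simp [hEdef]))
      n24.symm n45 n12 n15 ((G.bipartite h11).symm) ((G.sign_symm v1 u1).trans s11)
  · exact G.contra_helper _ hsimp h h21 (hmin _ (by simp [hEdef]))
      h13.symm (by rw [Sym2.eq_swap]; exact hmin _ (by simp [hEdef]))
      n24.symm n46 n12 n16 ((G.bipartite h11).symm) ((G.sign_symm v1 u1).trans s11)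
  · exact G.contra_helper _ hsimp h h32 (hmin _ (by simp [hEdef]))
      h21.symm (by rw [Sym2.eq_swap]; exact hmin _ (by simp [hEdef]))
      n35.symm n45.symm n23 n24 ((G.bipartite h22).symm) ((G.sign_symm v2 u2).trans s22)
  · exact G.contra_helper _ hsimp h h31 (hmin _ (by simp [hEdef]))
      h12.symm (by rw [Sym2.eq_swap]; exact hmin _ (by simp [hEdef]))
      n34.symm n45 n13 n15 ((G.bipartite h11).symm) ((G.sign_symm v1 u1).trans s11)
  · exact G.contra_helper _ hsimp h h31 (hmin _ (by simp [hEdef]))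
      h13.symm (by rw [Sym2.eq_swap]; exact hmin _ (by simp [hEdef]))
      n34.symm n46 n13 n16 ((G.bipartite h11).symm) ((G.sign_symm v1 u1).trans s11)

end SignedBigraph
section BackAux
namespace SignedBigraph
variable {V : Type u}

lemma deleteEdges_deleteEdges' (G : SignedBigraph V) (s s' : Set (Sym2 V)) :
    (G.deleteEdges s).deleteEdges s' = G.deleteEdges (s ∪ s') := by
  unfold deleteEdges
  congr 1
  exact SimpleGraph.deleteEdges_deleteEdges s s'

lemma chordal_of_aux (r : Sym2 V → ℕ) :
    ∀ (D : Finset (Sym2 V)) (G : SignedBigraph V),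
      (↑D ⊆ G.graph.edgeSet) →
      (∀ e ∈ D, ∀ e' ∈ D, r e = r e' → e = e') →
      (∀ e ∈ D, ∃ a b, e = s(a,b) ∧
        (G.deleteEdges {e' | e' ∈ D ∧ r e' < r e}).SignedSimplicial a b) →
      ∃ l : List (Sym2 V), l.Nodup ∧ (∀ e, e ∈ D ↔ e ∈ l) ∧
        ∀ (i : ℕ) (h : i < l.length), ∃ a b : V,
          l.get ⟨i, h⟩ = s(a, b) ∧
          (G.deleteEdges {e | e ∈ l.take i}).SignedSimplicial a b := by
  classical
  intro D
  induction D using Finset.strongInduction with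
  | _ D ih =>
    intro G hsub hinj hstep
    rcases D.eq_empty_or_nonempty with rfl | hne
    · exact ⟨[], by simp, by simp, fun i h => absurd h (by simp)⟩
    · obtain ⟨e0, he0, hmin⟩ := D.exists_min_image r hne
      have hstrict : ∀ e ∈ D.erase e0, r e0 < r e := by
        intro e he
        rcases Finset.mem_erase.mp he with ⟨hne0, heD⟩
        rcases lt_or_eq_of_le (hmin e heD) with h | h
        · exact h
        · exact absurd (hinj e0 he0 e heD h) (Ne.symm hne0)
      have hyp1 : ↑(D.erase e0) ⊆ (G.deleteEdges {e0}).graph.edgeSet := by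
        intro e he
        rcases Finset.mem_erase.mp (by exact_mod_cast he) with ⟨hne0, heD⟩
        show e ∈ (G.graph.deleteEdges {e0}).edgeSet
        rw [SimpleGraph.edgeSet_deleteEdges]
        exact ⟨hsub heD, by simpa using hne0⟩
      have hyp2 : ∀ e ∈ D.erase e0, ∀ e' ∈ D.erase e0, r e = r e' → e = e' := by
        intro e he e' he' hr
        exact hinj e (Finset.mem_of_mem_erase he) e' (Finset.mem_of_mem_erase he') hr
      have hyp3 : ∀ e ∈ D.erase e0, ∃ a b, e = s(a,b) ∧
          ((G.deleteEdges {e0}).deleteEdges {e' | e' ∈ D.erase e0 ∧ r e' < r e}).SignedSimplicial a b := by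
        intro e he
        obtain ⟨a, b, heq, hs⟩ := hstep e (Finset.mem_of_mem_erase he)
        refine ⟨a, b, heq, ?_⟩
        rw [deleteEdges_deleteEdges']
        have hset : {e' | e' ∈ D ∧ r e' < r e} = {e0} ∪ {e' | e' ∈ D.erase e0 ∧ r e' < r e} := by
          ext e'
          simp only [Set.mem_setOf_eq, Set.mem_union, Set.mem_singleton_iff, Finset.mem_erase]
          constructor
          · rintro ⟨heD, hlt⟩
            by_cases h : e' = e0
            · exact Or.inl h
            · exact Or.inr ⟨⟨h, heD⟩, hlt⟩
          · rintro (rfl | ⟨⟨_, heD⟩, hlt⟩)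
            · exact ⟨he0, hstrict e he⟩
            · exact ⟨heD, hlt⟩
        rwa [hset] at hs
      obtain ⟨l', hnd', hmem', hstep'⟩ := ih (D.erase e0) (Finset.erase_ssubset he0)
          (G.deleteEdges {e0}) hyp1 hyp2 hyp3
      refine ⟨e0 :: l', ?_, ?_, ?_⟩
      · exact List.nodup_cons.mpr
          ⟨fun h => (Finset.notMem_erase e0 D) ((hmem' e0).mpr h), hnd'⟩
      · intro e
        constructor
        · intro he
          by_cases h : e = e0
          · exact h ▸ List.mem_cons_self
          · exact List.mem_cons_of_mem _ ((hmem' e).mp (Finset.mem_erase.mpr ⟨h, he⟩))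
        · intro he
          rcases List.mem_cons.mp he with rfl | h
          · exact he0
          · exact Finset.mem_of_mem_erase ((hmem' e).mpr h)
      · intro i h
        cases i with
        | zero =>
          obtain ⟨a, b, heq, hs⟩ := hstep e0 he0
          refine ⟨a, b, by simpa using heq, ?_⟩
          have hset : {e' | e' ∈ D ∧ r e' < r e0} = {e | e ∈ (e0 :: l').take 0} := by
            ext e'
            simp only [List.take_zero, List.not_mem_nil, Set.mem_setOf_eq, iff_false]
            rintro ⟨heD, hlt⟩
            exact absurd (hmin e' heD) (by omega)
          rwa [hset] at hs
        | succ i =>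
          have hi : i < l'.length := by simpa using h
          obtain ⟨a, b, heq, hs⟩ := hstep' i hi
          refine ⟨a, b, by simpa using heq, ?_⟩
          rw [deleteEdges_deleteEdges'] at hs
          have hset : {e0} ∪ {e | e ∈ l'.take i} = {e | e ∈ (e0 :: l').take (i+1)} := by
            ext e'
            simp [List.take_succ_cons]
          rwa [hset] at hs

lemma isChordal_of_rank [Fintype V] (G : SignedBigraph V) (r : Sym2 V → ℕ)
    (hinj : ∀ e ∈ G.graph.edgeSet, ∀ e' ∈ G.graph.edgeSet, r e = r e' → e = e')
    (hstep : ∀ e ∈ G.graph.edgeSet, ∃ a b, e = s(a,b) ∧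
      (G.deleteEdges {e' | e' ∈ G.graph.edgeSet ∧ r e' < r e}).SignedSimplicial a b) :
    G.IsChordal := by
  classical
  have hfin : G.graph.edgeSet.Finite := Set.toFinite _
  have hyp1 : ↑hfin.toFinset ⊆ G.graph.edgeSet := by
    intro e he
    exact (Set.Finite.mem_toFinset hfin).mp (by exact_mod_cast he)
  have hyp2 : ∀ e ∈ hfin.toFinset, ∀ e' ∈ hfin.toFinset, r e = r e' → e = e' := by
    intro e he e' he' hr
    exact hinj e ((Set.Finite.mem_toFinset hfin).mp he) e' ((Set.Finite.mem_toFinset hfin).mp he') hr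
  have hyp3 : ∀ e ∈ hfin.toFinset, ∃ a b, e = s(a,b) ∧
      (G.deleteEdges {e' | e' ∈ hfin.toFinset ∧ r e' < r e}).SignedSimplicial a b := by
    intro e he
    obtain ⟨a, b, heq, hs⟩ := hstep e ((Set.Finite.mem_toFinset hfin).mp he)
    refine ⟨a, b, heq, ?_⟩
    have hset : {e' | e' ∈ G.graph.edgeSet ∧ r e' < r e} = {e' | e' ∈ hfin.toFinset ∧ r e' < r e} := by
      ext e'
      exact and_congr_left' (Set.Finite.mem_toFinset hfin).symm
    rwa [hset] at hs
  obtain ⟨l, h1, h2, h3⟩ := chordal_of_aux r hfin.toFinset G hyp1 hyp2 hyp3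
  exact ⟨l, h1, fun e => by rw [← h2 e, Set.Finite.mem_toFinset], h3⟩

end SignedBigraph
end BackAux
namespace SignedBigraph
variable {V : Type u}

lemma pw4 {a b c d : V} (h1 : a≠b) (h2 : a≠c) (h3 : a≠d) (h4 : b≠c) (h5 : b≠d) (h6 : c≠d) :
    [a,b,c,d].Pairwise (· ≠ ·) := by simp_all [List.pairwise_cons]

lemma pw5 {a b c d e : V} (h1 : a≠b) (h2 : a≠c) (h3 : a≠d) (h4 : a≠e) (h5 : b≠c) (h6 : b≠d)
    (h7 : b≠e) (h8 : c≠d) (h9 : c≠e) (h10 : d≠e) :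
    [a,b,c,d,e].Pairwise (· ≠ ·) := by simp_all [List.pairwise_cons]

lemma pw6 {a b c d e f : V} (h1 : a≠b) (h2 : a≠c) (h3 : a≠d) (h4 : a≠e) (h5 : a≠f) (h6 : b≠c)
    (h7 : b≠d) (h8 : b≠e) (h9 : b≠f) (h10 : c≠d) (h11 : c≠e) (h12 : c≠f) (h13 : d≠e)
    (h14 : d≠f) (h15 : e≠f) :
    [a,b,c,d,e,f].Pairwise (· ≠ ·) := by simp_all [List.pairwise_cons]

def NegAdj (G : SignedBigraph V) (u w : V) : Prop := G.Adj u w ∧ G.sign u w = false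

def TwoNeg (G : SignedBigraph V) (u : V) : Prop :=
  ∃ w w', w ≠ w' ∧ G.NegAdj u w ∧ G.NegAdj u w'

lemma NegAdj.symm' {G : SignedBigraph V} {u w : V} (h : G.NegAdj u w) : G.NegAdj w u :=
  ⟨h.1.symm, (G.sign_symm w u).trans h.2⟩

lemma bool_eq_of_ne_ne : ∀ {a b c : Bool}, a ≠ c → b ≠ c → a = b := by decide

lemma side_false_of_adj {G : SignedBigraph V} {u w : V} (h : G.Adj u w)
    (hu : G.side u = true) : G.side w = false := by
  have := G.bipartite h
  rw [hu] at this
  exact (Bool.not_eq_true _).mp (Ne.symm this)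

lemma side_true_of_adj {G : SignedBigraph V} {u w : V} (h : G.Adj u w)
    (hu : G.side u = false) : G.side w = true := by
  have := G.bipartite h
  rw [hu] at this
  exact (Bool.not_eq_false _).mp (Ne.symm this)

lemma ne_of_sides {G : SignedBigraph V} {x y : V} (hx : G.side x = true)
    (hy : G.side y = false) : x ≠ y := by
  intro h; rw [h, hy] at hx; exact Bool.false_ne_true hx

lemma hasF4_of_matching (G : SignedBigraph V)
    (hcomp : ∀ a b : V, G.side a ≠ G.side b → G.Adj a b) {c1 c2 c3 d1 d2 d3 : V}
    (h1 : G.NegAdj c1 d1) (h2 : G.NegAdj c2 d2) (h3 : G.NegAdj c3 d3)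
    (hs1 : G.side c1 = true) (hs2 : G.side c2 = true) (hs3 : G.side c3 = true)
    (hc12 : c1 ≠ c2) (hc13 : c1 ≠ c3) (hc23 : c2 ≠ c3)
    (hd12 : d1 ≠ d2) (hd13 : d1 ≠ d3) (hd23 : d2 ≠ d3) : G.HasF4 := by
  have ht1 : G.side d1 = false := side_false_of_adj h1.1 hs1
  have ht2 : G.side d2 = false := side_false_of_adj h2.1 hs2
  have ht3 : G.side d3 = false := side_false_of_adj h3.1 hs3
  have hadj : ∀ x y : V, G.side x = true → G.side y = false → G.Adj x y := by
    intro x y hx hy; exact hcomp x y (by rw [hx, hy]; simp)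
  have hnadj : ∀ x y : V, G.side x = G.side y → ¬ G.Adj x y := by
    intro x y hxy h; exact G.bipartite h hxy
  exact ⟨c1, c2, c3, d1, d2, d3,
    pw6 hc12 hc13 (ne_of_sides hs1 ht1) (ne_of_sides hs1 ht2) (ne_of_sides hs1 ht3)
      hc23 (ne_of_sides hs2 ht1) (ne_of_sides hs2 ht2) (ne_of_sides hs2 ht3)
      (ne_of_sides hs3 ht1) (ne_of_sides hs3 ht2) (ne_of_sides hs3 ht3) hd12 hd13 hd23,
    h1.1, hadj _ _ hs1 ht2, hadj _ _ hs1 ht3,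
    hadj _ _ hs2 ht1, h2.1, hadj _ _ hs2 ht3,
    hadj _ _ hs3 ht1, hadj _ _ hs3 ht2, h3.1,
    hnadj _ _ (hs1.trans hs2.symm), hnadj _ _ (hs1.trans hs3.symm),
    hnadj _ _ (hs2.trans hs3.symm),
    hnadj _ _ (ht1.trans ht2.symm), hnadj _ _ (ht1.trans ht3.symm),
    hnadj _ _ (ht2.trans ht3.symm),
    h1.2, h2.2, h3.2⟩

lemma not_twoNeg_pair (G : SignedBigraph V)
    (hcomp : ∀ a b : V, G.side a ≠ G.side b → G.Adj a b)
    (hF1 : ¬ G.HasF1) (hF2 : ¬ G.HasF2) (hF3 : ¬ G.HasF3)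
    {u1 u2 : V} (hside : G.side u1 = G.side u2) (hne : u1 ≠ u2)
    (h1 : G.TwoNeg u1) (h2 : G.TwoNeg u2) : False := by
  classical
  obtain ⟨d1, d2, hdne, hd1, hd2⟩ := h1
  obtain ⟨e1, e2, hene, he1, he2⟩ := h2
  have hnadj : ∀ x y : V, G.side x = G.side y → ¬ G.Adj x y := by
    intro x y hxy h; exact G.bipartite h hxy
  have hvs : ∀ w : V, G.NegAdj u1 w ∨ G.NegAdj u2 w → G.side w ≠ G.side u1 := by
    rintro w (h | h)
    · exact (G.bipartite h.1).symm
    · rw [hside]; exact (G.bipartite h.1).symm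
  by_cases hC : ∃ f g, f ≠ g ∧ G.NegAdj u1 f ∧ G.NegAdj u1 g ∧ G.NegAdj u2 f ∧ G.NegAdj u2 g
  · obtain ⟨f, g, hfg, hf1, hg1, hf2, hg2⟩ := hC
    exact hF1 ⟨u1, u2, f, g,
      pw4 hne (fun h => hvs f (Or.inl hf1) (by rw [h]))
        (fun h => hvs g (Or.inl hg1) (by rw [h]))
        (fun h => hvs f (Or.inl hf1) (by rw [← h, ← hside]))
        (fun h => hvs g (Or.inl hg1) (by rw [← h, ← hside])) hfg,
      hf1.1, hg1.1, hf2.1, hg2.1, hnadj _ _ hside,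
      hnadj _ _ (bool_eq_of_ne_ne (hvs f (Or.inl hf1)) (hvs g (Or.inl hg1))),
      hf1.2, hg1.2, hf2.2, hg2.2⟩
  by_cases hD : ∃ p q r s', p ≠ q ∧ r ≠ s' ∧ G.NegAdj u1 p ∧ G.NegAdj u1 q ∧
      G.NegAdj u2 r ∧ G.NegAdj u2 s' ∧ p ≠ r ∧ p ≠ s' ∧ q ≠ r ∧ q ≠ s'
  · obtain ⟨p, q, r, s', hpq, hrs, hp, hq, hr, hs', hpr, hps, hqr, hqs⟩ := hD
    have sp := hvs p (Or.inl hp)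
    have sq := hvs q (Or.inl hq)
    have sr := hvs r (Or.inr hr)
    have ss := hvs s' (Or.inr hs')
    have hadj : ∀ w : V, G.side w ≠ G.side u1 → G.Adj u2 w := by
      intro w hw; exact hcomp u2 w (by rw [← hside]; exact fun h => hw h.symm)
    have hadj1 : ∀ w : V, G.side w ≠ G.side u1 → G.Adj u1 w := by
      intro w hw; exact hcomp u1 w (fun h => hw h.symm)
    exact hF3 ⟨u1, u2, p, q, r, s',
      pw6 hne (fun h => sp (by rw [h])) (fun h => sq (by rw [h]))
        (fun h => sr (by rw [h])) (fun h => ss (by rw [h]))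
        (fun h => sp (by rw [← h, ← hside])) (fun h => sq (by rw [← h, ← hside]))
        (fun h => sr (by rw [← h, ← hside])) (fun h => ss (by rw [← h, ← hside]))
        hpq hpr hps hqr hqs hrs,
      hp.1, hq.1, hadj1 r sr, hadj1 s' ss,
      hadj p sp, hadj q sq, hr.1, hs'.1,
      hnadj _ _ hside,
      hnadj _ _ (bool_eq_of_ne_ne sp sq), hnadj _ _ (bool_eq_of_ne_ne sp sr),
      hnadj _ _ (bool_eq_of_ne_ne sp ss), hnadj _ _ (bool_eq_of_ne_ne sq sr),
      hnadj _ _ (bool_eq_of_ne_ne sq ss), hnadj _ _ (bool_eq_of_ne_ne sr ss),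
      hp.2, hq.2, hr.2, hs'.2⟩
  -- overlap case: derive F2
  have inner : ∀ c m w : V, G.NegAdj u1 m → G.NegAdj u1 c → G.NegAdj u2 c →
      G.NegAdj u2 w → m ≠ c → w ≠ c → False := by
    intro c m w hm hc1 hc2 hw hmc hwc
    have hmw : m ≠ w := by
      intro h
      exact hC ⟨c, m, hmc.symm, hc1, hm, hc2, h ▸ hw⟩
    have sm := hvs m (Or.inl hm)
    have sc := hvs c (Or.inl hc1)
    have sw := hvs w (Or.inr hw)
    have hadj : ∀ z : V, G.side z ≠ G.side u1 → G.Adj u2 z := by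
      intro z hz; exact hcomp u2 z (by rw [← hside]; exact fun h => hz h.symm)
    have hadj1 : ∀ z : V, G.side z ≠ G.side u1 → G.Adj u1 z := by
      intro z hz; exact hcomp u1 z (fun h => hz h.symm)
    exact hF2 ⟨u1, u2, m, c, w,
      pw5 hne (fun h => sm (by rw [h])) (fun h => sc (by rw [h])) (fun h => sw (by rw [h]))
        (fun h => sm (by rw [← h, ← hside])) (fun h => sc (by rw [← h, ← hside]))
        (fun h => sw (by rw [← h, ← hside])) hmc hmw hwc.symm,
      hm.1, hc1.1, hadj1 w sw, hadj m sm, hc2.1, hw.1,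
      hnadj _ _ hside,
      hnadj _ _ (bool_eq_of_ne_ne sm sc), hnadj _ _ (bool_eq_of_ne_ne sm sw),
      hnadj _ _ (bool_eq_of_ne_ne sc sw),
      hm.2, hc1.2, hc2.2, hw.2⟩
  have hcase : d1 = e1 ∨ d1 = e2 ∨ d2 = e1 ∨ d2 = e2 := by
    by_contra hcon
    push_neg at hcon
    exact hD ⟨d1, d2, e1, e2, hdne, hene, hd1, hd2, he1, he2,
      hcon.1, hcon.2.1, hcon.2.2.1, hcon.2.2.2⟩
  rcases hcase with h | h | h | h
  · subst h; exact inner d1 d2 e2 hd2 hd1 he1 he2 hdne.symm hene.symm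
  · subst h; exact inner d1 d2 e1 hd2 hd1 he2 he1 hdne.symm hene
  · subst h; exact inner d2 d1 e2 hd1 hd2 he1 he2 hdne hene.symm
  · subst h; exact inner d2 d1 e1 hd1 hd2 he2 he1 hdne hene

end SignedBigraph
namespace SignedBigraph
variable {V : Type u}

def CoverPair (G : SignedBigraph V) : Prop :=
  ∃ a b : V, G.side a = true ∧ G.side b = false ∧
    ∀ u w : V, G.Adj u w → G.sign u w = false → u = a ∨ w = a ∨ u = b ∨ w = b

lemma cover_of_claim (G : SignedBigraph V) {A B : V} (hA : G.side A = true)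
    (hB : G.side B = false)
    (claim : ∀ u w, G.side u = true → G.NegAdj u w → u = A ∨ w = B) :
    G.CoverPair := by
  refine ⟨A, B, hA, hB, ?_⟩
  intro u w hadj hsgn
  cases hsu : G.side u with
  | false =>
    have hw : G.side w = true := side_true_of_adj hadj hsu
    rcases claim w u hw ⟨hadj.symm, (G.sign_symm w u).trans hsgn⟩ with h | h
    · exact Or.inr (Or.inl h)
    · exact Or.inr (Or.inr (Or.inl h))
  | true =>
    rcases claim u w hsu ⟨hadj, hsgn⟩ with h | h
    · exact Or.inl h
    · exact Or.inr (Or.inr (Or.inr h))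

def flip (G : SignedBigraph V) : SignedBigraph V where
  graph := G.graph
  sign := G.sign
  sign_symm := G.sign_symm
  side := fun v => !G.side v
  bipartite := fun a b h hh => G.bipartite h (Bool.not_inj hh)

lemma cover_aux (G : SignedBigraph V)
    (hcomp : ∀ a b : V, G.side a ≠ G.side b → G.Adj a b)
    (hF1 : ¬ G.HasF1) (hF2 : ¬ G.HasF2) (hF3 : ¬ G.HasF3) (hF4 : ¬ G.HasF4)
    {a b0 : V} (haside : G.side a = true) (hb0 : G.side b0 = false)
    (haTN : G.TwoNeg a) : G.CoverPair := by
  classical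
  by_cases hBT : ∃ b, G.side b = false ∧ G.TwoNeg b
  · obtain ⟨b, hbside, hbTN⟩ := hBT
    apply cover_of_claim G haside hbside
    intro u w hu hneg
    by_contra hcon
    push_neg at hcon
    obtain ⟨hua, hwb⟩ := hcon
    have hwside : G.side w = false := side_false_of_adj hneg.1 hu
    have step1 : ¬ G.NegAdj a w := by
      intro h
      exact not_twoNeg_pair G hcomp hF1 hF2 hF3 (hwside.trans hbside.symm) hwb
        ⟨a, u, fun hh => hua hh.symm, h.symm', hneg.symm'⟩ hbTN
    have step2 : ¬ G.NegAdj u b := by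
      intro h
      exact not_twoNeg_pair G hcomp hF1 hF2 hF3 (hu.trans haside.symm) hua
        ⟨w, b, hwb, hneg, h⟩ haTN
    obtain ⟨p, p', hpp, hap, hap'⟩ := haTN
    have hd' : ∃ d', G.NegAdj a d' ∧ d' ≠ b := by
      by_cases h : p = b
      · exact ⟨p', hap', fun hh => hpp (h.trans hh.symm)⟩
      · exact ⟨p, hap, h⟩
    obtain ⟨d', had', hd'b⟩ := hd'
    obtain ⟨q, q', hqq, hbq, hbq'⟩ := hbTN
    have hc' : ∃ c', G.NegAdj b c' ∧ c' ≠ a := by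
      by_cases h : q = a
      · exact ⟨q', hbq', fun hh => hqq (h.trans hh.symm)⟩
      · exact ⟨q, hbq, h⟩
    obtain ⟨c', hbc', hc'a⟩ := hc'
    have hd'w : d' ≠ w := fun hh => step1 (hh ▸ had')
    have hc'u : c' ≠ u := fun hh => step2 (hh ▸ hbc'.symm')
    have hc'side : G.side c' = true := side_true_of_adj hbc'.1 hbside
    exact hF4 (hasF4_of_matching G hcomp had' hbc'.symm' hneg haside hc'side hu
      hc'a.symm hua.symm hc'u hd'b hd'w (fun hh => hwb hh.symm))
  · by_cases hE : ∃ u w, G.side u = true ∧ G.NegAdj u w ∧ u ≠ a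
    · obtain ⟨u0, w0, hu0s, hneg0, hu0a⟩ := hE
      have hw0side : G.side w0 = false := side_false_of_adj hneg0.1 hu0s
      apply cover_of_claim G haside hw0side
      intro u w hu hneg
      by_contra hcon
      push_neg at hcon
      obtain ⟨hua, hww0⟩ := hcon
      have hwside : G.side w = false := side_false_of_adj hneg.1 hu
      have huu0 : u ≠ u0 := by
        intro hh
        subst hh
        exact not_twoNeg_pair G hcomp hF1 hF2 hF3 (hu.trans haside.symm) hua
          ⟨w, w0, hww0, hneg, hneg0⟩ haTN
      have hnw : ¬ G.NegAdj a w :=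
        fun h => hBT ⟨w, hwside, ⟨a, u, fun hh => hua hh.symm, h.symm', hneg.symm'⟩⟩
      have hnw0 : ¬ G.NegAdj a w0 :=
        fun h => hBT ⟨w0, hw0side, ⟨a, u0, fun hh => hu0a hh.symm, h.symm', hneg0.symm'⟩⟩
      obtain ⟨p, p', hpp, hap, hap'⟩ := haTN
      have hpw : p ≠ w := fun h => hnw (h ▸ hap)
      have hpw0 : p ≠ w0 := fun h => hnw0 (h ▸ hap)
      exact hF4 (hasF4_of_matching G hcomp hap hneg0 hneg haside hu0s hu
        hu0a.symm hua.symm huu0.symm hpw0 hpw (fun hh => hww0 hh.symm))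
    · push_neg at hE
      exact cover_of_claim G haside hb0 (fun u w hu hn => Or.inl (hE u w hu hn))

lemma cover_noTN (G : SignedBigraph V)
    (hcomp : ∀ a b : V, G.side a ≠ G.side b → G.Adj a b)
    (hF4 : ¬ G.HasF4) {a0 b0 : V} (ha0 : G.side a0 = true) (hb0 : G.side b0 = false)
    (hTN : ∀ v, ¬ G.TwoNeg v) : G.CoverPair := by
  classical
  have huniq : ∀ v x y : V, G.NegAdj v x → G.NegAdj v y → x = y := by
    intro v x y hx hy
    by_contra h
    exact hTN v ⟨x, y, h, hx, hy⟩
  by_cases h1 : ∃ u w, G.side u = true ∧ G.NegAdj u w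
  · obtain ⟨c1, d1, hc1s, hn1⟩ := h1
    by_cases h2 : ∃ u w, G.side u = true ∧ G.NegAdj u w ∧ u ≠ c1
    · obtain ⟨c2, d2, hc2s, hn2, hne12⟩ := h2
      have hd12 : d1 ≠ d2 := by
        intro hh
        exact hne12 (huniq d1 c2 c1 (hh ▸ hn2.symm') hn1.symm')
      have hd2s : G.side d2 = false := side_false_of_adj hn2.1 hc2s
      apply cover_of_claim G hc1s hd2s
      intro u w hu hn
      by_contra hcon
      push_neg at hcon
      obtain ⟨huc1, hwd2⟩ := hcon
      have huc2 : u ≠ c2 := by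
        intro hh
        exact hwd2 (huniq u w d2 hn (hh ▸ hn2))
      have hwd1 : w ≠ d1 := by
        intro hh
        exact huc1 (huniq d1 u c1 (hh ▸ hn.symm') hn1.symm')
      exact hF4 (hasF4_of_matching G hcomp hn1 hn2 hn hc1s hc2s hu
        hne12.symm (fun h => huc1 h.symm) (fun h => huc2 h.symm)
        hd12 (fun h => hwd1 h.symm) (fun h => hwd2 h.symm))
    · push_neg at h2
      have hd1s : G.side d1 = false := side_false_of_adj hn1.1 hc1s
      exact cover_of_claim G hc1s hd1s (fun u w hu hn => Or.inl (h2 u w hu hn))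
  · push_neg at h1
    exact cover_of_claim G ha0 hb0 (fun u w hu hn => absurd hn (h1 u w hu))

lemma cover_exists (G : SignedBigraph V)
    (hcomp : ∀ a b : V, G.side a ≠ G.side b → G.Adj a b)
    (hF : ¬ (G.HasF1 ∨ G.HasF2 ∨ G.HasF3 ∨ G.HasF4))
    {a0 b0 : V} (ha0 : G.side a0 = true) (hb0 : G.side b0 = false) :
    G.CoverPair := by
  classical
  have hF1 : ¬ G.HasF1 := fun h => hF (Or.inl h)
  have hF2 : ¬ G.HasF2 := fun h => hF (Or.inr (Or.inl h))
  have hF3 : ¬ G.HasF3 := fun h => hF (Or.inr (Or.inr (Or.inl h)))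
  have hF4 : ¬ G.HasF4 := fun h => hF (Or.inr (Or.inr (Or.inr h)))
  by_cases hA : ∃ v, G.side v = true ∧ G.TwoNeg v
  · obtain ⟨a, ha, hTA⟩ := hA
    exact cover_aux G hcomp hF1 hF2 hF3 hF4 ha hb0 hTA
  · by_cases hB : ∃ v, G.side v = false ∧ G.TwoNeg v
    · obtain ⟨b, hb, hTB⟩ := hB
      have hcomp' : ∀ a b : V, G.flip.side a ≠ G.flip.side b → G.flip.Adj a b := by
        intro x y h
        exact hcomp x y (fun hh => h (congrArg (fun t => !t) hh))
      have hbs : G.flip.side b = true := by show (!G.side b) = true; rw [hb]; rfl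
      have ha0s : G.flip.side a0 = false := by show (!G.side a0) = false; rw [ha0]; rfl
      have hTB' : G.flip.TwoNeg b := hTB
      obtain ⟨a', b', ha', hb', hcov⟩ :=
        cover_aux G.flip hcomp' hF1 hF2 hF3 hF4 hbs ha0s hTB'
      refine ⟨b', a', ?_, ?_, ?_⟩
      · have h' : (!G.side b') = false := hb'
        simpa using h'
      · have h' : (!G.side a') = true := ha'
        simpa using h'
      · intro u w hadj hsgn
        rcases hcov u w hadj hsgn with h | h | h | h
        · exact Or.inr (Or.inr (Or.inl h))
        · exact Or.inr (Or.inr (Or.inr h))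
        · exact Or.inl h
        · exact Or.inr (Or.inl h)
    · apply cover_noTN G hcomp hF4 ha0 hb0
      intro v hv
      cases hsv : G.side v with
      | true => exact hA ⟨v, hsv, hv⟩
      | false => exact hB ⟨v, hsv, hv⟩

end SignedBigraph
namespace SignedBigraph
variable {V : Type u}

lemma rank_inj_aux {q i i' j j' : ℕ} (hj : j < q) (hj' : j' < q)
    (h : i * q + j = i' * q + j') : i = i' ∧ j = j' := by
  have hq : 0 < q := lt_of_le_of_lt (Nat.zero_le j) hj
  have e1 : (i * q + j) / q = i := by
    rw [Nat.add_comm, Nat.add_mul_div_right _ _ hq, Nat.div_eq_of_lt hj, Nat.zero_add]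
  have e2 : (i' * q + j') / q = i' := by
    rw [Nat.add_comm, Nat.add_mul_div_right _ _ hq, Nat.div_eq_of_lt hj', Nat.zero_add]
  have hi : i = i' := by rw [← e1, h, e2]
  subst hi
  exact ⟨rfl, by omega⟩

lemma isChordal_of_no_edges (G : SignedBigraph V) (h : ∀ e, e ∉ G.graph.edgeSet) :
    G.IsChordal :=
  ⟨[], List.nodup_nil, fun e => by simp [h e], fun i hi => absurd hi (by simp)⟩

lemma exists_enum (G : SignedBigraph V) [Fintype V] {t : Bool} {a : V} (ha : G.side a = t) :
    ∃ (p : ℕ) (x : Fin p → V) (hp : 0 < p),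
      Function.Injective x ∧ (∀ i, G.side (x i) = t) ∧
      (∀ v, G.side v = t → ∃ i, x i = v) ∧ x ⟨0, hp⟩ = a := by
  classical
  set Xf : Finset V := Finset.univ.filter (fun v => G.side v = t) with hXf
  have haX : a ∈ Xf := by simp [hXf, ha]
  have hp : 0 < Xf.card := Finset.card_pos.mpr ⟨a, haX⟩
  let eX := Xf.equivFin
  refine ⟨Xf.card, fun i => (eX.symm (Equiv.swap (eX ⟨a, haX⟩) ⟨0, hp⟩ i) : V), hp,
    ?_, ?_, ?_, ?_⟩
  · intro i j h
    have h1 := Subtype.coe_injective h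
    have h2 := eX.symm.injective h1
    exact (Equiv.swap _ _).injective h2
  · intro i
    have h2 := (eX.symm (Equiv.swap (eX ⟨a, haX⟩) ⟨0, hp⟩ i)).2
    exact (Finset.mem_filter.mp h2).2
  · intro v hv
    refine ⟨Equiv.swap (eX ⟨a, haX⟩) ⟨0, hp⟩ (eX ⟨v, by simp [hXf, hv]⟩), ?_⟩
    dsimp only
    rw [Equiv.swap_apply_self, Equiv.symm_apply_apply]
  · dsimp only
    rw [Equiv.swap_apply_right, Equiv.symm_apply_apply]

lemma isChordal_of_coverPair [Fintype V] (G : SignedBigraph V)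
    (hcomp : ∀ a b : V, G.side a ≠ G.side b → G.Adj a b)
    (hcp : G.CoverPair) : G.IsChordal := by
  classical
  obtain ⟨a, b, ha, hb, hcov⟩ := hcp
  obtain ⟨p, x, hp, hxinj, hxside, hxsurj, hx0⟩ := exists_enum G ha
  obtain ⟨q, y, hq, hyinj, hyside, hysurj, hy0⟩ := exists_enum G hb
  haveI : Nonempty (Fin p) := ⟨⟨0, hp⟩⟩
  haveI : Nonempty (Fin q) := ⟨⟨0, hq⟩⟩
  set ix : V → Fin p := Function.invFun x with hix
  set iy : V → Fin q := Function.invFun y with hiy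
  have hxix : ∀ v, G.side v = true → x (ix v) = v :=
    fun v hv => Function.invFun_eq (hxsurj v hv)
  have hyiy : ∀ v, G.side v = false → y (iy v) = v :=
    fun v hv => Function.invFun_eq (hysurj v hv)
  set g : V → V → ℕ := fun u w =>
    if G.side u = true ∧ G.side w = false then (ix u : ℕ) * q + (iy w : ℕ)
    else if G.side w = true ∧ G.side u = false then (ix w : ℕ) * q + (iy u : ℕ)
    else 0 with hg
  have hgsymm : ∀ u w, g u w = g w u := by
    intro u w
    simp only [hg]
    cases hu : G.side u <;> cases hw : G.side w <;> simp [hu, hw]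
  set r : Sym2 V → ℕ := Sym2.lift ⟨g, hgsymm⟩ with hr
  have hrmk : ∀ u w, G.side u = true → G.side w = false →
      r s(u,w) = (ix u : ℕ) * q + (iy w : ℕ) := by
    intro u w hu hw
    rw [hr, Sym2.lift_mk]
    simp [hg, hu, hw]
  have horient : ∀ e ∈ G.graph.edgeSet, ∃ u w, e = s(u,w) ∧ G.side u = true ∧
      G.side w = false ∧ G.Adj u w := by
    intro e
    induction e using Sym2.ind with
    | _ u w =>
      intro he
      have hadj : G.Adj u w := (SimpleGraph.mem_edgeSet G.graph).mp he
      cases hu : G.side u with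
      | true => exact ⟨u, w, rfl, hu, side_false_of_adj hadj hu, hadj⟩
      | false => exact ⟨w, u, Sym2.eq_swap, side_true_of_adj hadj hu, hu, hadj.symm⟩
  apply isChordal_of_rank G r
  · intro e he e' he' hre
    obtain ⟨u, w, rfl, hu, hw, hadj⟩ := horient e he
    obtain ⟨u', w', rfl, hu', hw', hadj'⟩ := horient e' he'
    rw [hrmk u w hu hw, hrmk u' w' hu' hw'] at hre
    obtain ⟨h1, h2⟩ := rank_inj_aux (iy w).2 (iy w').2 hre
    have huu : u = u' := by
      rw [← hxix u hu, ← hxix u' hu']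
      exact congrArg x (Fin.ext h1)
    have hww : w = w' := by
      rw [← hyiy w hw, ← hyiy w' hw']
      exact congrArg y (Fin.ext h2)
    rw [huu, hww]
  · intro e he
    obtain ⟨u, w, rfl, hu, hw, hadj⟩ := horient e he
    set S : Set (Sym2 V) := {e' | e' ∈ G.graph.edgeSet ∧ r e' < r s(u,w)} with hSdef
    refine ⟨u, w, rfl, ?_, ?_⟩
    · show (G.graph.deleteEdges S).Adj u w
      rw [SimpleGraph.deleteEdges_adj]
      exact ⟨hadj, by rintro ⟨-, hlt⟩; exact lt_irrefl _ hlt⟩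
    · have key : ∀ c d : V, c ∈ (G.deleteEdges S).edgeNbhd u w →
          d ∈ (G.deleteEdges S).edgeNbhd u w →
          G.side c = true → G.side d = false →
          (G.deleteEdges S).Adj c d ∧ (G.deleteEdges S).sign c d = true := by
        intro c d hcmem hdmem hc hd
        obtain ⟨hc1, hc2⟩ := hcmem
        obtain ⟨hd1, hd2⟩ := hdmem
        simp only [Set.mem_insert_iff, Set.mem_singleton_iff, not_or] at hc2 hd2
        have hcw : (G.graph.deleteEdges S).Adj w c := by
          rcases hc1 with h | h
          · exfalso
            have : G.Adj u c := (SimpleGraph.deleteEdges_adj.mp h).1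
            exact G.bipartite this (hu.trans hc.symm)
          · exact h
        have hdu : (G.graph.deleteEdges S).Adj u d := by
          rcases hd1 with h | h
          · exact h
          · exfalso
            have : G.Adj w d := (SimpleGraph.deleteEdges_adj.mp h).1
            exact G.bipartite this (hw.trans hd.symm)
        obtain ⟨hGcw, hScw⟩ := SimpleGraph.deleteEdges_adj.mp hcw
        obtain ⟨hGdu, hSdu⟩ := SimpleGraph.deleteEdges_adj.mp hdu
        have hrcw : r s(w,c) = (ix c : ℕ) * q + (iy w : ℕ) := by
          rw [Sym2.eq_swap]; exact hrmk c w hc hw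
        have hrdu : r s(u,d) = (ix u : ℕ) * q + (iy d : ℕ) := hrmk u d hu hd
        have hlec : (ix u : ℕ) < (ix c : ℕ) := by
          have hle : (ix u : ℕ) ≤ (ix c : ℕ) := by
            by_contra hlt
            push_neg at hlt
            apply hScw
            refine ⟨(SimpleGraph.mem_edgeSet G.graph).mpr hGcw, ?_⟩
            rw [hrcw, hrmk u w hu hw]
            have := (Nat.mul_lt_mul_right hq).mpr hlt
            omega
          rcases lt_or_eq_of_le hle with h | h
          · exact h
          · exfalso
            apply hc2.1
            rw [← hxix c hc, ← hxix u hu]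
            exact (congrArg x (Fin.ext h.symm))
        have hled : (iy w : ℕ) < (iy d : ℕ) := by
          have hle : (iy w : ℕ) ≤ (iy d : ℕ) := by
            by_contra hlt
            push_neg at hlt
            apply hSdu
            refine ⟨(SimpleGraph.mem_edgeSet G.graph).mpr hGdu, ?_⟩
            rw [hrdu, hrmk u w hu hw]
            omega
          rcases lt_or_eq_of_le hle with h | h
          · exact h
          · exfalso
            apply hd2.2
            rw [← hyiy d hd, ← hyiy w hw]
            exact (congrArg y (Fin.ext h.symm))
        have hGcd : G.Adj c d := hcomp c d (by rw [hc, hd]; simp)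
        constructor
        · show (G.graph.deleteEdges S).Adj c d
          rw [SimpleGraph.deleteEdges_adj]
          refine ⟨hGcd, ?_⟩
          rintro ⟨-, hlt⟩
          rw [hrmk c d hc hd, hrmk u w hu hw] at hlt
          have h1 : (ix u : ℕ) * q + q ≤ (ix c : ℕ) * q := by
            have := Nat.mul_le_mul_right q (Nat.succ_le_of_lt hlec)
            rwa [Nat.succ_mul] at this
          have h2 : (iy w : ℕ) < q := (iy w).2
          omega
        · show G.sign c d = true
          by_contra hsgn
          have hsgn' : G.sign c d = false := by
            cases hcd : G.sign c d
            · rfl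
            · exact absurd hcd hsgn
          have hca : c ≠ a := by
            intro hh
            have : ix c = ⟨0, hp⟩ := by
              apply hxinj
              rw [hxix c hc, hx0, hh]
            rw [this] at hlec
            simp at hlec
          have hdb : d ≠ b := by
            intro hh
            have : iy d = ⟨0, hq⟩ := by
              apply hyinj
              rw [hyiy d hd, hy0, hh]
            rw [this] at hled
            simp at hled
          rcases hcov c d hGcd hsgn' with h | h | h | h
          · exact hca h
          · exact ne_of_sides ha hd h.symm
          · exact ne_of_sides hc hb h
          · exact hdb h
      intro c hcmem d hdmem hside
      have hside' : G.side c ≠ G.side d := hside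
      cases hc : G.side c with
      | true =>
        have hd : G.side d = false := by
          cases hdc : G.side d
          · rfl
          · exact absurd (hc.trans hdc.symm) hside'
        exact key c d hcmem hdmem hc hd
      | false =>
        have hd : G.side d = true := by
          cases hdc : G.side d
          · exact absurd (hc.trans hdc.symm) hside'
          · rfl
        obtain ⟨hA, hSg⟩ := key d c hdmem hcmem hd hc
        exact ⟨hA.symm, (G.sign_symm c d).trans hSg⟩

end SignedBigraph

open SignedBigraph in
/-- Theorem 2.2: a signed complete bigraph is chordal iff it
contains no member of `F₁ ∪ F₂ ∪ F₃ ∪ F₄` as an induced subgraph. -/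
theorem signedCompleteBigraph_isChordal_iff_F
    {V : Type u} [Fintype V] (G : SignedBigraph V)
    (hcomp : ∀ a b : V, G.side a ≠ G.side b → G.Adj a b) :
    G.IsChordal ↔ ¬ (G.HasF1 ∨ G.HasF2 ∨ G.HasF3 ∨ G.HasF4) := by
  constructor
  · intro hc hF
    rcases hF with h | h | h | h
    · exact hc.no_F1 h
    · exact hc.no_F2 h
    · exact hc.no_F3 h
    · exact hc.no_F4 h
  · intro hF
    classical
    by_cases hX : ∃ v, G.side v = true
    · by_cases hY : ∃ v, G.side v = false
      · obtain ⟨a0, ha0⟩ := hX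
        obtain ⟨b0, hb0⟩ := hY
        exact isChordal_of_coverPair G hcomp (cover_exists G hcomp hF ha0 hb0)
      · push_neg at hY
        apply isChordal_of_no_edges
        intro e
        induction e using Sym2.ind with
        | _ u w =>
          intro he
          have hadj : G.Adj u w := (SimpleGraph.mem_edgeSet G.graph).mp he
          have hu : G.side u = true := by
            cases h : G.side u
            · exact absurd h (hY u)
            · rfl
          have hw : G.side w = true := by
            cases h : G.side w
            · exact absurd h (hY w)
            · rfl
          exact G.bipartite hadj (hu.trans hw.symm)
    · push_neg at hX
      apply isChordal_of_no_edges
      intro e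
      induction e using Sym2.ind with
      | _ u w =>
        intro he
        have hadj : G.Adj u w := (SimpleGraph.mem_edgeSet G.graph).mp he
        have hu : G.side u = false := by
          cases h : G.side u
          · rfl
          · exact absurd h (hX u)
        have hw : G.side w = false := by
          cases h : G.side w
          · rfl
          · exact absurd h (hX w)
        exact G.bipartite hadj (hu.trans hw.symm)
end
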